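/- arXiv:1209.5514 — 7 statements merged into one kernel-verified Lean document; each statement's English description precedes it below -/
import Mathlib

section
/- Let Γ1 = (V1, E1) be a connected cubic graph with a bridge e1 = (a,b), and let v1, v2, v3, v4 be four new vertices. Let ΓD be the graph with vertex set V1 ∪ {v1, v2, v3, v4} and edge set (E1 \ {e1}) ∪ {(a,v1), (v1,v2), (v1,v3), (v2,v3), (v2,v4), (v3,v4), (v4,b)}. Then ΓD is a connected cubic graph, and each of the edges (a,v1) and (v4,b) is a bridge of ΓD. -/
open SimpleGraph

/-- A graph is cubic if every vertex has exactly three neighbours. -/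
def IsCubic {V : Type*} (G : SimpleGraph V) : Prop :=
  ∀ v : V, (G.neighborSet v).ncard = 3

/-- A cracker of `G`: a nonempty set of edges of `G`, no two of which share a
vertex, whose deletion disconnects `G`, while no proper subset disconnects `G`. -/
def IsCracker {V : Type*} (G : SimpleGraph V) (C : Set (Sym2 V)) : Prop :=
  C.Nonempty ∧ C ⊆ G.edgeSet ∧
    C.Pairwise (fun e f => ∀ v : V, ¬(v ∈ e ∧ v ∈ f)) ∧
    ¬(G.deleteEdges C).Connected ∧
    ∀ C' : Set (Sym2 V), C' ⊂ C → (G.deleteEdges C').Connected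

/-- A `k`-cracker is a cracker consisting of `k` edges. -/
def IsKCracker {V : Type*} (G : SimpleGraph V) (C : Set (Sym2 V)) (k : ℕ) : Prop :=
  IsCracker G C ∧ C.ncard = k

/-- The type 1 parthenogenic operation: delete the bridge (a,b) and insert a
parthenogenic diamond on four new vertices v₁, v₂, v₃, v₄ (here Fin 4) with edges
(a,v₁), (v₁,v₂), (v₁,v₃), (v₂,v₃), (v₂,v₄), (v₃,v₄), (v₄,b). -/
def parth1 {V₁ : Type*} (G₁ : SimpleGraph V₁) (a b : V₁) : SimpleGraph (V₁ ⊕ Fin 4) :=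
  SimpleGraph.fromRel (fun p q =>
    (∃ x y : V₁, p = Sum.inl x ∧ q = Sum.inl y ∧ G₁.Adj x y ∧ s(x, y) ≠ s(a, b)) ∨
    (p = Sum.inl a ∧ q = Sum.inr 0) ∨
    (p = Sum.inr 0 ∧ q = Sum.inr 1) ∨
    (p = Sum.inr 0 ∧ q = Sum.inr 2) ∨
    (p = Sum.inr 1 ∧ q = Sum.inr 2) ∨
    (p = Sum.inr 1 ∧ q = Sum.inr 3) ∨
    (p = Sum.inr 2 ∧ q = Sum.inr 3) ∨
    (p = Sum.inr 3 ∧ q = Sum.inl b))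

section ParthAux

variable {V₁ : Type*} {G₁ : SimpleGraph V₁} {a b : V₁}

lemma parth_walk_invariant {V : Type*} {G : SimpleGraph V} (P : V → Prop)
    (h : ∀ p q, G.Adj p q → (P p ↔ P q)) {u v : V} (hr : G.Reachable u v) : P u ↔ P v := by
  obtain ⟨w⟩ := hr
  induction w with
  | nil => rfl
  | cons h' _ ih => exact (h _ _ h').trans ih

lemma parth_sxy_ne {x y : V₁} (h : x ≠ a ∨ y ≠ b) (h' : x ≠ b ∨ y ≠ a) : s(x, y) ≠ s(a, b) := by
  intro hh
  rcases Sym2.eq_iff.mp hh with ⟨rfl, rfl⟩ | ⟨rfl, rfl⟩ <;> tauto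

lemma parth_nbr_inl {x : V₁} (hx1 : x ≠ a) (hx2 : x ≠ b) :
    (parth1 G₁ a b).neighborSet (Sum.inl x) = Sum.inl '' G₁.neighborSet x := by
  ext p
  constructor
  · intro hp
    rw [mem_neighborSet, parth1, fromRel_adj] at hp
    obtain ⟨hne, h | h⟩ := hp <;>
      rcases h with ⟨x', y', hx', hy', hadj, hs⟩ | ⟨h1, h2⟩ | ⟨h1, h2⟩ | ⟨h1, h2⟩ | ⟨h1, h2⟩ |
        ⟨h1, h2⟩ | ⟨h1, h2⟩ | ⟨h1, h2⟩ <;>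
    (try simp only [ne_eq, Sym2.eq_iff, not_or, not_and] at hs) <;>
    first
    | (simp_all; done)
    | (simp_all; exact hadj.symm)
    | (simp_all; exact hadj)
    | (simp_all; tauto)
  · rintro ⟨y, hadj, rfl⟩
    rw [mem_neighborSet, parth1, fromRel_adj]
    exact ⟨by simpa using hadj.ne,
      Or.inl (Or.inl ⟨x, y, rfl, rfl, hadj, parth_sxy_ne (Or.inl hx1) (Or.inl hx2)⟩)⟩

lemma parth_nbr_a (hab : a ≠ b) :
    (parth1 G₁ a b).neighborSet (Sum.inl a) =
      insert (Sum.inr 0) (Sum.inl '' (G₁.neighborSet a \ {b})) := by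
  ext p
  constructor
  · intro hp
    rw [mem_neighborSet, parth1, fromRel_adj] at hp
    obtain ⟨hne, h | h⟩ := hp <;>
      rcases h with ⟨x', y', hx', hy', hadj, hs⟩ | ⟨h1, h2⟩ | ⟨h1, h2⟩ | ⟨h1, h2⟩ | ⟨h1, h2⟩ |
        ⟨h1, h2⟩ | ⟨h1, h2⟩ | ⟨h1, h2⟩ <;>
    (try simp only [ne_eq, Sym2.eq_iff, not_or, not_and] at hs) <;>
    first
    | (simp_all; done)
    | (simp_all; exact hadj.symm)
    | (simp_all; exact hadj)
    | (simp_all; tauto)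
  · rintro (rfl | ⟨y, ⟨hadj, hyb⟩, rfl⟩) <;>
      rw [mem_neighborSet, parth1, fromRel_adj]
    · exact ⟨by simp, Or.inl (Or.inr (Or.inl ⟨rfl, rfl⟩))⟩
    · exact ⟨by simpa using hadj.ne,
        Or.inl (Or.inl ⟨a, y, rfl, rfl, hadj, parth_sxy_ne (Or.inr (by simpa using hyb))
          (Or.inl hab)⟩)⟩

lemma parth_nbr_b (hab : a ≠ b) :
    (parth1 G₁ a b).neighborSet (Sum.inl b) =
      insert (Sum.inr 3) (Sum.inl '' (G₁.neighborSet b \ {a})) := by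
  ext p
  constructor
  · intro hp
    rw [mem_neighborSet, parth1, fromRel_adj] at hp
    obtain ⟨hne, h | h⟩ := hp <;>
      rcases h with ⟨x', y', hx', hy', hadj, hs⟩ | ⟨h1, h2⟩ | ⟨h1, h2⟩ | ⟨h1, h2⟩ | ⟨h1, h2⟩ |
        ⟨h1, h2⟩ | ⟨h1, h2⟩ | ⟨h1, h2⟩ <;>
    (try simp only [ne_eq, Sym2.eq_iff, not_or, not_and] at hs) <;>
    first
    | (simp_all; done)
    | (simp_all; exact hadj.symm)
    | (simp_all; exact hadj)
    | (simp_all; tauto)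
  · rintro (rfl | ⟨y, ⟨hadj, hya⟩, rfl⟩) <;>
      rw [mem_neighborSet, parth1, fromRel_adj]
    · exact ⟨by simp, Or.inr (Or.inr (Or.inr (Or.inr (Or.inr (Or.inr (Or.inr (Or.inr
        ⟨rfl, rfl⟩)))))))⟩
    · exact ⟨by simpa using hadj.ne,
        Or.inl (Or.inl ⟨b, y, rfl, rfl, hadj, parth_sxy_ne (Or.inl (Ne.symm hab))
          (Or.inr (by simpa using hya))⟩)⟩

lemma parth_nbr_r0 :
    (parth1 G₁ a b).neighborSet (Sum.inr 0) = {Sum.inl a, Sum.inr 1, Sum.inr 2} := by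
  ext p
  constructor
  · intro hp
    rw [mem_neighborSet, parth1, fromRel_adj] at hp
    obtain ⟨hne, h | h⟩ := hp <;>
      rcases h with ⟨x', y', hx', hy', hadj, hs⟩ | ⟨h1, h2⟩ | ⟨h1, h2⟩ | ⟨h1, h2⟩ | ⟨h1, h2⟩ |
        ⟨h1, h2⟩ | ⟨h1, h2⟩ | ⟨h1, h2⟩ <;> simp_all
  · rintro (rfl | rfl | rfl) <;> rw [mem_neighborSet, parth1, fromRel_adj]
    · exact ⟨by simp, Or.inr (Or.inr (Or.inl ⟨rfl, rfl⟩))⟩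
    · exact ⟨by simp, Or.inl (Or.inr (Or.inr (Or.inl ⟨rfl, rfl⟩)))⟩
    · exact ⟨by simp, Or.inl (Or.inr (Or.inr (Or.inr (Or.inl ⟨rfl, rfl⟩))))⟩

lemma parth_nbr_r1 :
    (parth1 G₁ a b).neighborSet (Sum.inr 1) = {Sum.inr 0, Sum.inr 2, Sum.inr 3} := by
  ext p
  constructor
  · intro hp
    rw [mem_neighborSet, parth1, fromRel_adj] at hp
    obtain ⟨hne, h | h⟩ := hp <;>
      rcases h with ⟨x', y', hx', hy', hadj, hs⟩ | ⟨h1, h2⟩ | ⟨h1, h2⟩ | ⟨h1, h2⟩ | ⟨h1, h2⟩ |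
        ⟨h1, h2⟩ | ⟨h1, h2⟩ | ⟨h1, h2⟩ <;> simp_all
  · rintro (rfl | rfl | rfl) <;> rw [mem_neighborSet, parth1, fromRel_adj]
    · exact ⟨by simp, Or.inr (Or.inr (Or.inr (Or.inl ⟨rfl, rfl⟩)))⟩
    · exact ⟨by simp, Or.inl (Or.inr (Or.inr (Or.inr (Or.inr (Or.inl ⟨rfl, rfl⟩)))))⟩
    · exact ⟨by simp, Or.inl (Or.inr (Or.inr (Or.inr (Or.inr (Or.inr (Or.inl ⟨rfl, rfl⟩))))))⟩

lemma parth_nbr_r2 :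
    (parth1 G₁ a b).neighborSet (Sum.inr 2) = {Sum.inr 0, Sum.inr 1, Sum.inr 3} := by
  ext p
  constructor
  · intro hp
    rw [mem_neighborSet, parth1, fromRel_adj] at hp
    obtain ⟨hne, h | h⟩ := hp <;>
      rcases h with ⟨x', y', hx', hy', hadj, hs⟩ | ⟨h1, h2⟩ | ⟨h1, h2⟩ | ⟨h1, h2⟩ | ⟨h1, h2⟩ |
        ⟨h1, h2⟩ | ⟨h1, h2⟩ | ⟨h1, h2⟩ <;> simp_all
  · rintro (rfl | rfl | rfl) <;> rw [mem_neighborSet, parth1, fromRel_adj]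
    · exact ⟨by simp, Or.inr (Or.inr (Or.inr (Or.inr (Or.inl ⟨rfl, rfl⟩))))⟩
    · exact ⟨by simp, Or.inr (Or.inr (Or.inr (Or.inr (Or.inr (Or.inl ⟨rfl, rfl⟩)))))⟩
    · exact ⟨by simp, Or.inl (Or.inr (Or.inr (Or.inr (Or.inr (Or.inr (Or.inr
        (Or.inl ⟨rfl, rfl⟩)))))))⟩

lemma parth_nbr_r3 :
    (parth1 G₁ a b).neighborSet (Sum.inr 3) = {Sum.inr 1, Sum.inr 2, Sum.inl b} := by
  ext p
  constructor
  · intro hp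
    rw [mem_neighborSet, parth1, fromRel_adj] at hp
    obtain ⟨hne, h | h⟩ := hp <;>
      rcases h with ⟨x', y', hx', hy', hadj, hs⟩ | ⟨h1, h2⟩ | ⟨h1, h2⟩ | ⟨h1, h2⟩ | ⟨h1, h2⟩ |
        ⟨h1, h2⟩ | ⟨h1, h2⟩ | ⟨h1, h2⟩ <;> simp_all
  · rintro (rfl | rfl | rfl) <;> rw [mem_neighborSet, parth1, fromRel_adj]
    · exact ⟨by simp, Or.inr (Or.inr (Or.inr (Or.inr (Or.inr (Or.inr (Or.inl
        ⟨rfl, rfl⟩))))))⟩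
    · exact ⟨by simp, Or.inr (Or.inr (Or.inr (Or.inr (Or.inr (Or.inr (Or.inr (Or.inl
        ⟨rfl, rfl⟩)))))))⟩
    · exact ⟨by simp, Or.inl (Or.inr (Or.inr (Or.inr (Or.inr (Or.inr (Or.inr (Or.inr
        ⟨rfl, rfl⟩)))))))⟩

lemma parth_card3 {α : Type*} {x y z : α} (h1 : x ≠ y) (h2 : x ≠ z) (h3 : y ≠ z) :
    ({x, y, z} : Set α).ncard = 3 := by
  rw [Set.ncard_insert_of_notMem (by simp [h1, h2])
    ((Set.finite_singleton z).insert y), Set.ncard_pair h3]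

lemma parth_adj_a0 : (parth1 G₁ a b).Adj (Sum.inl a) (Sum.inr 0) := by
  rw [parth1, fromRel_adj]
  exact ⟨by simp, Or.inl (Or.inr (Or.inl ⟨rfl, rfl⟩))⟩

lemma parth_adj_01 : (parth1 G₁ a b).Adj (Sum.inr 0) (Sum.inr 1) := by
  rw [parth1, fromRel_adj]
  exact ⟨by simp, Or.inl (Or.inr (Or.inr (Or.inl ⟨rfl, rfl⟩)))⟩

lemma parth_adj_02 : (parth1 G₁ a b).Adj (Sum.inr 0) (Sum.inr 2) := by
  rw [parth1, fromRel_adj]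
  exact ⟨by simp, Or.inl (Or.inr (Or.inr (Or.inr (Or.inl ⟨rfl, rfl⟩))))⟩

lemma parth_adj_13 : (parth1 G₁ a b).Adj (Sum.inr 1) (Sum.inr 3) := by
  rw [parth1, fromRel_adj]
  exact ⟨by simp, Or.inl (Or.inr (Or.inr (Or.inr (Or.inr (Or.inr (Or.inl ⟨rfl, rfl⟩))))))⟩

lemma parth_adj_3b : (parth1 G₁ a b).Adj (Sum.inr 3) (Sum.inl b) := by
  rw [parth1, fromRel_adj]
  exact ⟨by simp, Or.inl (Or.inr (Or.inr (Or.inr (Or.inr (Or.inr (Or.inr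
    (Or.inr ⟨rfl, rfl⟩)))))))⟩

lemma parth_reach_step {x y : V₁} (h : G₁.Adj x y) :
    (parth1 G₁ a b).Reachable (Sum.inl x) (Sum.inl y) := by
  by_cases hs : s(x, y) = s(a, b)
  · have hr : (parth1 G₁ a b).Reachable (Sum.inl a) (Sum.inl b) :=
      ((parth_adj_a0.reachable.trans parth_adj_01.reachable).trans
        parth_adj_13.reachable).trans parth_adj_3b.reachable
    rcases Sym2.eq_iff.mp hs with ⟨rfl, rfl⟩ | ⟨rfl, rfl⟩
    · exact hr
    · exact hr.symm
  · refine Adj.reachable ?_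
    rw [parth1, fromRel_adj]
    exact ⟨by simpa using h.ne, Or.inl (Or.inl ⟨x, y, rfl, rfl, h, hs⟩)⟩

lemma parth_reach_inl {x y : V₁} (h : G₁.Reachable x y) :
    (parth1 G₁ a b).Reachable (Sum.inl x) (Sum.inl y) := by
  obtain ⟨w⟩ := h
  induction w with
  | nil => exact Reachable.refl _
  | cons h' _ ih => exact (parth_reach_step h').trans ih

lemma parth_connected (h₁ : G₁.Connected) : (parth1 G₁ a b).Connected := by
  rw [connected_iff]
  refine ⟨?_, ⟨Sum.inr 0⟩⟩
  have key : ∀ p, (parth1 G₁ a b).Reachable p (Sum.inl a) := by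
    rintro (x | i)
    · exact parth_reach_inl (h₁.preconnected x a)
    · fin_cases i
      · exact parth_adj_a0.reachable.symm
      · exact parth_adj_01.reachable.symm.trans parth_adj_a0.reachable.symm
      · exact parth_adj_02.reachable.symm.trans parth_adj_a0.reachable.symm
      · exact (parth_adj_13.reachable.symm.trans parth_adj_01.reachable.symm).trans
          parth_adj_a0.reachable.symm
  exact fun p q => (key p).trans (key q).symm

lemma parth_invariant_aux (hnr : ¬(G₁ \ fromEdgeSet {s(a, b)}).Reachable a b)
    (c : V₁) (e : Sym2 (V₁ ⊕ Fin 4))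
    (hea : e = s(Sum.inl a, Sum.inr 0) ∨ e = s(Sum.inr 3, Sum.inl b))
    (hcb : (e = s(Sum.inl a, Sum.inr 0) → ¬(G₁ \ fromEdgeSet {s(a, b)}).Reachable c b) ∧
           (e = s(Sum.inr 3, Sum.inl b) → ¬(G₁ \ fromEdgeSet {s(a, b)}).Reachable c a)) :
    ∀ p q, ((parth1 G₁ a b) \ fromEdgeSet {e}).Adj p q →
      (Sum.elim (fun x => (G₁ \ fromEdgeSet {s(a, b)}).Reachable c x)
        (fun _ => False) p ↔
       Sum.elim (fun x => (G₁ \ fromEdgeSet {s(a, b)}).Reachable c x)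
        (fun _ => False) q) := by
  intro p q hpq
  rw [sdiff_adj, fromEdgeSet_adj] at hpq
  obtain ⟨hG, hne'⟩ := hpq
  have hne'' : s(p, q) ≠ e := fun h => hne' ⟨by simp [h], hG.ne⟩
  rw [parth1, fromRel_adj] at hG
  have step : ∀ x y : V₁, G₁.Adj x y → s(x, y) ≠ s(a, b) →
      ((G₁ \ fromEdgeSet {s(a, b)}).Reachable c x ↔
       (G₁ \ fromEdgeSet {s(a, b)}).Reachable c y) := by
    intro x y hadj hs
    have hxy : (G₁ \ fromEdgeSet {s(a, b)}).Adj x y := by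
      rw [sdiff_adj, fromEdgeSet_adj]
      exact ⟨hadj, fun h => hs h.1⟩
    exact ⟨fun h => h.trans hxy.reachable, fun h => h.trans hxy.symm.reachable⟩
  obtain ⟨hne, h | h⟩ := hG <;>
    rcases h with ⟨x', y', hx', hy', hadj, hs⟩ | ⟨h1, h2⟩ | ⟨h1, h2⟩ | ⟨h1, h2⟩ | ⟨h1, h2⟩ |
      ⟨h1, h2⟩ | ⟨h1, h2⟩ | ⟨h1, h2⟩ <;> subst_vars <;>
    simp only [Sum.elim_inl, Sum.elim_inr, iff_self, iff_true, iff_false, false_iff,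
      true_iff] <;>
    first
    | trivial
    | exact Iff.rfl
    | exact step _ _ hadj hs
    | exact (step _ _ hadj hs).symm
    | (intro hR
       rcases hea with rfl | rfl <;>
       first
       | exact hne'' rfl
       | exact hne'' Sym2.eq_swap
       | exact hcb.1 rfl hR
       | exact hcb.2 rfl hR)

end ParthAux

/-- inserting a parthenogenic diamond into a bridge of a connected cubic
graph yields a connected cubic graph in which (a,v₁) and (v₄,b) are bridges. -/
theorem parth1_spec {V₁ : Type*} (G₁ : SimpleGraph V₁)
    (h₁ : G₁.Connected) (hc₁ : IsCubic G₁)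
    (a b : V₁) (hbr : G₁.IsBridge s(a, b)) :
    (parth1 G₁ a b).Connected ∧ IsCubic (parth1 G₁ a b) ∧
      (parth1 G₁ a b).IsBridge s(Sum.inl a, Sum.inr 0) ∧
      (parth1 G₁ a b).IsBridge s(Sum.inr 3, Sum.inl b) := by
  have hnr : ¬(G₁ \ fromEdgeSet {s(a, b)}).Reachable a b := isBridge_iff.mp hbr
  have hadj : G₁.Adj a b := hbr.reachable_iff_adj.mp (h₁.preconnected a b)
  have hab : a ≠ b := hadj.ne
  refine ⟨parth_connected h₁, ?_, ?_, ?_⟩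
  · rintro (x | i)
    · by_cases hxa : x = a
      · subst hxa
        have hfin : (G₁.neighborSet x).Finite :=
          Set.finite_of_ncard_ne_zero (by rw [hc₁ x]; norm_num)
        rw [parth_nbr_a hab, Set.ncard_insert_of_notMem (by simp)
            (hfin.diff.image _),
          Set.ncard_image_of_injective _ Sum.inl_injective,
          Set.ncard_diff_singleton_of_mem (s := G₁.neighborSet x)
            ((G₁.mem_neighborSet x b).mpr hadj), hc₁ x]
      · by_cases hxb : x = b
        · subst hxb
          have hfin : (G₁.neighborSet x).Finite :=
            Set.finite_of_ncard_ne_zero (by rw [hc₁ x]; norm_num)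
          rw [parth_nbr_b hab, Set.ncard_insert_of_notMem (by simp)
              (hfin.diff.image _),
            Set.ncard_image_of_injective _ Sum.inl_injective,
            Set.ncard_diff_singleton_of_mem (s := G₁.neighborSet x)
              ((G₁.mem_neighborSet x a).mpr hadj.symm), hc₁ x]
        · rw [parth_nbr_inl hxa hxb, Set.ncard_image_of_injective _ Sum.inl_injective]
          exact hc₁ x
    · fin_cases i
      · show ((parth1 G₁ a b).neighborSet (Sum.inr 0)).ncard = 3
        rw [parth_nbr_r0]; exact parth_card3 (by simp) (by simp) (by simp)
      · show ((parth1 G₁ a b).neighborSet (Sum.inr 1)).ncard = 3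
        rw [parth_nbr_r1]; exact parth_card3 (by simp) (by simp) (by simp)
      · show ((parth1 G₁ a b).neighborSet (Sum.inr 2)).ncard = 3
        rw [parth_nbr_r2]; exact parth_card3 (by simp) (by simp) (by simp)
      · show ((parth1 G₁ a b).neighborSet (Sum.inr 3)).ncard = 3
        rw [parth_nbr_r3]; exact parth_card3 (by simp) (by simp) (by simp)
  · rw [isBridge_iff]
    refine fun hr => ?_
    have := parth_walk_invariant _
      (parth_invariant_aux hnr a (s(Sum.inl a, Sum.inr 0)) (Or.inl rfl)
        ⟨fun _ => hnr, fun h => by simp [Sym2.eq_iff] at h⟩) hr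
    simp only [Sum.elim_inl, Sum.elim_inr, iff_false] at this
    exact this (Reachable.refl a)
  · rw [isBridge_iff]
    refine fun hr => ?_
    have := parth_walk_invariant _
      (parth_invariant_aux hnr b (s(Sum.inr 3, Sum.inl b)) (Or.inr rfl)
        ⟨fun h => by simp [Sym2.eq_iff] at h, fun _ => fun h => hnr h.symm⟩) hr
    simp only [Sum.elim_inl, Sum.elim_inr, false_iff] at this
    exact this (Reachable.refl b)
end

section
/- Let Γ1 = (V1, E1) be a connected cubic graph containing a 2-cracker {e1, e2} with e1 = (a,b) and e2 = (c,d), where a and c lie in the same connected component of Γ1 minus {e1, e2}. Let v1, v2 be two new vertices and let ΓD be the graph with vertex set V1 ∪ {v1, v2} and edge set (E1 \ {e1, e2}) ∪ {(a,v1), (b,v1), (c,v2), (d,v2), (v1,v2)}. Then ΓD is a connected cubic graph, and {(a,v1), (c,v2)} is a 2-cracker of ΓD. -/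
open SimpleGraph

/-- The type 2 parthenogenic operation: delete the two edges (a,b), (c,d) of a
2-cracker and insert a parthenogenic bridge on two new vertices v₁, v₂ (here Fin 2)
with edges (a,v₁), (b,v₁), (c,v₂), (d,v₂), (v₁,v₂). -/
def parth2 {V₁ : Type*} (G₁ : SimpleGraph V₁) (a b c d : V₁) : SimpleGraph (V₁ ⊕ Fin 2) :=
  SimpleGraph.fromRel (fun p q =>
    (∃ x y : V₁, p = Sum.inl x ∧ q = Sum.inl y ∧ G₁.Adj x y ∧
        s(x, y) ≠ s(a, b) ∧ s(x, y) ≠ s(c, d)) ∨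
    (p = Sum.inl a ∧ q = Sum.inr 0) ∨
    (p = Sum.inl b ∧ q = Sum.inr 0) ∨
    (p = Sum.inl c ∧ q = Sum.inr 1) ∨
    (p = Sum.inl d ∧ q = Sum.inr 1) ∨
    (p = Sum.inr 0 ∧ q = Sum.inr 1))

section Main

open Sum

variable {V₁ : Type*} {G₁ : SimpleGraph V₁} {a b c d : V₁}

lemma fin2_eq : ∀ i : Fin 2, i = 0 ∨ i = 1 := by decide

lemma walk_reach_del {V : Type*} {G : SimpleGraph V} (C : Set (Sym2 V)) {x y : V}
    (w : G.Walk x y) :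
    (G.deleteEdges C).Reachable x y ∨
      ∃ z, (∃ e ∈ C, z ∈ e) ∧ (G.deleteEdges C).Reachable x z := by
  induction w with
  | nil => exact Or.inl (Reachable.refl _)
  | @cons u v y h p ih =>
    by_cases hc : s(u, v) ∈ C
    · exact Or.inr ⟨u, ⟨_, hc, Sym2.mem_mk_left _ _⟩, Reachable.refl _⟩
    · have hadj : (G.deleteEdges C).Adj u v := deleteEdges_adj.2 ⟨h, hc⟩
      rcases ih with h1 | ⟨z, hz, h2⟩
      · exact Or.inl (hadj.reachable.trans h1)
      · exact Or.inr ⟨z, hz, hadj.reachable.trans h2⟩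

lemma walk_pres {W : Type*} {H : SimpleGraph W} (P : W → Prop)
    (hP : ∀ p q, H.Adj p q → P p → P q) {x y : W} (w : H.Walk x y) (hx : P x) : P y := by
  induction w with
  | nil => exact hx
  | cons h p ih => exact ih (hP _ _ h hx)

lemma hub_conn {C : Set (Sym2 V₁)} {a b d : V₁}
    (habd : ∀ x, (G₁.deleteEdges C).Reachable a x ∨ (G₁.deleteEdges C).Reachable b x ∨
      (G₁.deleteEdges C).Reachable d x)
    (H : SimpleGraph (V₁ ⊕ Fin 2))
    (hAdj : ∀ x y, (G₁.deleteEdges C).Adj x y → H.Adj (Sum.inl x) (Sum.inl y))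
    (t : V₁ ⊕ Fin 2)
    (hta : H.Reachable (inl a) t) (htb : H.Reachable (inl b) t) (htd : H.Reachable (inl d) t)
    (ht0 : H.Reachable (inr 0) t) (ht1 : H.Reachable (inr 1) t) : H.Connected := by
  have lift : ∀ x y : V₁, (G₁.deleteEdges C).Reachable x y → H.Reachable (inl x) (inl y) :=
    fun x y h => Reachable.map ⟨Sum.inl, fun h' => hAdj _ _ h'⟩ h
  rw [connected_iff]
  refine ⟨fun p q => ?_, ⟨inr 0⟩⟩
  have key : ∀ r, H.Reachable r t := by
    rintro (x | i)
    · rcases habd x with h | h | h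
      · exact ((lift _ _ h).symm.trans hta)
      · exact ((lift _ _ h).symm.trans htb)
      · exact ((lift _ _ h).symm.trans htd)
    · fin_cases i
      · exact ht0
      · exact ht1
  exact (key p).trans (key q).symm

lemma adj_inl_inl {x y : V₁} :
    (parth2 G₁ a b c d).Adj (inl x) (inl y) ↔
      (G₁.deleteEdges {s(a, b), s(c, d)}).Adj x y := by
  simp only [parth2, fromRel_adj, deleteEdges_adj, Set.mem_insert_iff, Set.mem_singleton_iff]
  constructor
  · rintro ⟨hne, h | h⟩ <;>
    · rcases h with ⟨x', y', hx, hy, hadj, h1, h2⟩ | h | h | h | h | h <;>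
        simp_all [Sym2.eq_iff] <;> tauto
  · rintro ⟨hadj, hne⟩
    push_neg at hne
    exact ⟨by simp [hadj.ne], Or.inl (Or.inl ⟨x, y, rfl, rfl, hadj, hne.1, hne.2⟩)⟩

lemma adj_inl_inr0 {x : V₁} :
    (parth2 G₁ a b c d).Adj (inl x) (inr 0) ↔ x = a ∨ x = b := by
  simp [parth2, fromRel_adj]

lemma adj_inl_inr1 {x : V₁} :
    (parth2 G₁ a b c d).Adj (inl x) (inr 1) ↔ x = c ∨ x = d := by
  simp [parth2, fromRel_adj]

lemma adj_inr_inr {i j : Fin 2} :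
    (parth2 G₁ a b c d).Adj (inr i) (inr j) ↔ i ≠ j := by
  simp only [parth2, fromRel_adj]
  constructor
  · rintro ⟨hne, _⟩; exact fun h' => hne (by rw [h'])
  · intro hne
    refine ⟨fun h => hne (by injection h), ?_⟩
    fin_cases i <;> fin_cases j <;> simp_all

lemma adj_inr_inl {i : Fin 2} {x : V₁} :
    (parth2 G₁ a b c d).Adj (inr i) (inl x) ↔
      (i = 0 ∧ (x = a ∨ x = b)) ∨ (i = 1 ∧ (x = c ∨ x = d)) := by
  rw [adj_comm]
  have : i = 0 ∨ i = 1 := by revert i; decide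
  rcases this with rfl | rfl
  · rw [adj_inl_inr0]; simp
  · rw [adj_inl_inr1]; simp

lemma endpoint_nbhd (x w : V₁) (j : Fin 2)
    (hmem : ∀ y, ¬(s(x, y) = s(a, b) ∨ s(x, y) = s(c, d)) ↔ y ≠ w)
    (hbridge : ∀ i : Fin 2, (parth2 G₁ a b c d).Adj (inl x) (inr i) ↔ i = j) :
    (parth2 G₁ a b c d).neighborSet (inl x) =
      insert (inr j) (Sum.inl '' (G₁.neighborSet x \ {w})) := by
  ext q
  rcases q with y | i
  · simp only [mem_neighborSet, adj_inl_inl, deleteEdges_adj, Set.mem_insert_iff,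
      Set.mem_image, Set.mem_diff, Set.mem_singleton_iff, hmem]
    constructor
    · rintro ⟨h1, h2⟩
      exact Or.inr ⟨y, ⟨h1, h2⟩, rfl⟩
    · rintro (h | ⟨y', ⟨h1, h2⟩, hy⟩)
      · exact absurd h (by simp)
      · obtain rfl : y' = y := by injection hy
        exact ⟨h1, h2⟩
  · simp only [mem_neighborSet, hbridge, Set.mem_insert_iff, Set.mem_image]
    constructor
    · rintro rfl; exact Or.inl rfl
    · rintro (h | ⟨y', _, hy⟩)
      · exact Sum.inr_injective h
      · exact absurd hy (by simp)

lemma generic_nbhd (x : V₁) (hxa : x ≠ a) (hxb : x ≠ b) (hxc : x ≠ c) (hxd : x ≠ d) :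
    (parth2 G₁ a b c d).neighborSet (inl x) = Sum.inl '' G₁.neighborSet x := by
  ext q
  rcases q with y | i
  · simp only [mem_neighborSet, adj_inl_inl, deleteEdges_adj, Set.mem_insert_iff,
      Set.mem_singleton_iff, Set.mem_image, Sym2.eq_iff]
    constructor
    · rintro ⟨h1, _⟩; exact ⟨y, h1, rfl⟩
    · rintro ⟨y', h1, hy⟩
      obtain rfl : y' = y := by injection hy
      exact ⟨h1, by push_neg; tauto⟩
  · have : i = 0 ∨ i = 1 := by revert i; decide
    simp only [mem_neighborSet, Set.mem_image]
    rcases this with rfl | rfl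
    · rw [adj_inl_inr0]; simp [hxa, hxb]
    · rw [adj_inl_inr1]; simp [hxc, hxd]

lemma cubic_parth2 (hc₁ : IsCubic G₁) (hAdjab : G₁.Adj a b) (hAdjcd : G₁.Adj c d)
    (hac : a ≠ c) (had : a ≠ d) (hbc : b ≠ c) (hbd : b ≠ d) :
    IsCubic (parth2 G₁ a b c d) := by
  have hab : a ≠ b := hAdjab.ne
  have hcd : c ≠ d := hAdjcd.ne
  have hfin : ∀ v, (G₁.neighborSet v).Finite := by
    intro v
    rw [← Set.not_infinite]
    intro h
    have h0 := Set.Infinite.ncard h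
    rw [hc₁ v] at h0
    exact three_ne_zero h0
  have hinj : Function.Injective (Sum.inl : V₁ → V₁ ⊕ Fin 2) := Sum.inl_injective
  have count : ∀ (x w : V₁) (j : Fin 2), G₁.Adj x w →
      (parth2 G₁ a b c d).neighborSet (inl x) =
        insert (inr j) (Sum.inl '' (G₁.neighborSet x \ {w})) →
      ((parth2 G₁ a b c d).neighborSet (inl x)).ncard = 3 := by
    intro x w j hadj heq
    rw [heq, Set.ncard_insert_of_notMem (by simp) (((hfin x).diff).image _),
      Set.ncard_image_of_injective _ hinj,
      Set.ncard_diff_singleton_of_mem ((G₁.mem_neighborSet x w).2 hadj), hc₁ x]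
  rintro (x | i)
  · by_cases hxa : x = a
    · subst hxa
      exact count x b 0 hAdjab (endpoint_nbhd x b 0
        (by intro y; simp [Sym2.eq_iff, hab, hac, had])
        (by intro i
            have : i = 0 ∨ i = 1 := by revert i; decide
            rcases this with rfl | rfl
            · rw [adj_inl_inr0]; simp
            · rw [adj_inl_inr1]; simp [hac, had]))
    · by_cases hxb : x = b
      · subst hxb
        exact count x a 0 hAdjab.symm (endpoint_nbhd x a 0
          (by intro y; simp [Sym2.eq_iff, hab, hab.symm, hbc, hbd])
          (by intro i
              have : i = 0 ∨ i = 1 := by revert i; decide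
              rcases this with rfl | rfl
              · rw [adj_inl_inr0]; simp
              · rw [adj_inl_inr1]; simp [hbc, hbd]))
      · by_cases hxc : x = c
        · subst hxc
          exact count x d 1 hAdjcd (endpoint_nbhd x d 1
            (by intro y; simp [Sym2.eq_iff, hcd, hac.symm, hbc.symm])
            (by intro i
                have : i = 0 ∨ i = 1 := by revert i; decide
                rcases this with rfl | rfl
                · rw [adj_inl_inr0]; simp [hac.symm, hbc.symm]
                · rw [adj_inl_inr1]; simp))
        · by_cases hxd : x = d
          · subst hxd
            exact count x c 1 hAdjcd.symm (endpoint_nbhd x c 1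
              (by intro y; simp [Sym2.eq_iff, hcd, hcd.symm, had.symm, hbd.symm])
              (by intro i
                  have : i = 0 ∨ i = 1 := by revert i; decide
                  rcases this with rfl | rfl
                  · rw [adj_inl_inr0]; simp [had.symm, hbd.symm]
                  · rw [adj_inl_inr1]; simp))
          · rw [generic_nbhd x hxa hxb hxc hxd, Set.ncard_image_of_injective _ hinj, hc₁ x]
  · have : i = 0 ∨ i = 1 := by revert i; decide
    rcases this with rfl | rfl
    · have hset : (parth2 G₁ a b c d).neighborSet (inr 0) =
          {inl a, inl b, inr 1} := by
        ext q
        rcases q with y | i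
        · rw [mem_neighborSet, adj_inr_inl]
          simp
        · rw [mem_neighborSet, adj_inr_inr]
          have : i = 0 ∨ i = 1 := by revert i; decide
          rcases this with rfl | rfl <;> simp
      rw [hset]
      exact Set.ncard_eq_three.2 ⟨_, _, _, by simp [hab], by simp, by simp, rfl⟩
    · have hset : (parth2 G₁ a b c d).neighborSet (inr 1) =
          {inl c, inl d, inr 0} := by
        ext q
        rcases q with y | i
        · rw [mem_neighborSet, adj_inr_inl]
          simp
        · rw [mem_neighborSet, adj_inr_inr]
          have : i = 0 ∨ i = 1 := by revert i; decide
          rcases this with rfl | rfl <;> simp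
      rw [hset]
      exact Set.ncard_eq_three.2 ⟨_, _, _, by simp [hcd], by simp, by simp, rfl⟩

end Main

open Sum

/-- inserting a parthenogenic bridge into a 2-cracker {(a,b),(c,d)} of a
connected cubic graph, where a and c lie on the same side of the 2-cracker, yields a
connected cubic graph in which {(a,v₁),(c,v₂)} is a 2-cracker. -/
theorem parth2_spec {V₁ : Type*} (G₁ : SimpleGraph V₁)
    (h₁ : G₁.Connected) (hc₁ : IsCubic G₁) (a b c d : V₁)
    (hcr : IsKCracker G₁ {s(a, b), s(c, d)} 2)
    (hside : (G₁.deleteEdges {s(a, b), s(c, d)}).Reachable a c) :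
    (parth2 G₁ a b c d).Connected ∧ IsCubic (parth2 G₁ a b c d) ∧
      IsKCracker (parth2 G₁ a b c d)
        {s(Sum.inl a, Sum.inr 0), s(Sum.inl c, Sum.inr 1)} 2 := by
  classical
  obtain ⟨⟨hne0, hsub, hpw, hdis, hmin⟩, hcard⟩ := hcr
  have hAdjab : G₁.Adj a b := G₁.mem_edgeSet.1 (hsub (Set.mem_insert _ _))
  have hAdjcd : G₁.Adj c d := G₁.mem_edgeSet.1 (hsub (by simp))
  have hab : a ≠ b := hAdjab.ne
  have hcd : c ≠ d := hAdjcd.ne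
  have hne_e : s(a, b) ≠ s(c, d) := by
    intro h
    rw [h] at hcard
    simp at hcard
  have hP := hpw (Set.mem_insert _ _) (by simp) hne_e
  have hac : a ≠ c := fun h => hP a ⟨by simp, by simp [h]⟩
  have had : a ≠ d := fun h => hP a ⟨by simp, by simp [h]⟩
  have hbc : b ≠ c := fun h => hP b ⟨by simp, by simp [h]⟩
  have hbd : b ≠ d := fun h => hP b ⟨by simp, by simp [h]⟩
  -- minimality instances
  have hconn_ab : (G₁.deleteEdges {s(a, b)}).Connected := by
    refine hmin _ ⟨by simp, fun hsup => ?_⟩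
    have := hsup (show s(c, d) ∈ ({s(a, b), s(c, d)} : Set (Sym2 V₁)) by simp)
    simp only [Set.mem_singleton_iff] at this
    exact hne_e this.symm
  have hconn_cd : (G₁.deleteEdges {s(c, d)}).Connected := by
    refine hmin _ ⟨by simp, fun hsup => ?_⟩
    have := hsup (show s(a, b) ∈ ({s(a, b), s(c, d)} : Set (Sym2 V₁)) by simp)
    simp only [Set.mem_singleton_iff] at this
    exact hne_e this
  -- classification of vertices of G₁ minus the cracker
  have habd : ∀ x, (G₁.deleteEdges {s(a, b), s(c, d)}).Reachable a x ∨
      (G₁.deleteEdges {s(a, b), s(c, d)}).Reachable b x ∨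
      (G₁.deleteEdges {s(a, b), s(c, d)}).Reachable d x := by
    intro x
    obtain ⟨w⟩ := h₁.preconnected x a
    rcases walk_reach_del {s(a, b), s(c, d)} w with h | ⟨z, ⟨e, he, hz⟩, hr⟩
    · exact Or.inl h.symm
    · simp only [Set.mem_insert_iff, Set.mem_singleton_iff] at he
      rcases he with rfl | rfl <;> rw [Sym2.mem_iff] at hz <;> rcases hz with rfl | rfl
      · exact Or.inl hr.symm
      · exact Or.inr (Or.inl hr.symm)
      · exact Or.inl (hside.trans hr.symm)
      · exact Or.inr (Or.inr hr.symm)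
  have hconn_of : (G₁.deleteEdges {s(a, b), s(c, d)}).Reachable a b →
      (G₁.deleteEdges {s(a, b), s(c, d)}).Reachable a d →
      (G₁.deleteEdges {s(a, b), s(c, d)}).Connected := by
    intro h1 h2
    rw [connected_iff]
    refine ⟨fun x y => ?_, ⟨a⟩⟩
    have key : ∀ x, (G₁.deleteEdges {s(a, b), s(c, d)}).Reachable a x := by
      intro x
      rcases habd x with h | h | h
      · exact h
      · exact h1.trans h
      · exact h2.trans h
    exact (key x).symm.trans (key y)
  have key_ad : (G₁.deleteEdges {s(a, b), s(c, d)}).Reachable a b →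
      (G₁.deleteEdges {s(a, b), s(c, d)}).Reachable a d := by
    intro h
    obtain ⟨w⟩ := hconn_cd.preconnected d a
    have hGG : (G₁.deleteEdges {s(c, d)}).deleteEdges {s(a, b)} =
        G₁.deleteEdges {s(a, b), s(c, d)} := by
      rw [deleteEdges_deleteEdges, Set.singleton_union, Set.pair_comm]
    rcases walk_reach_del {s(a, b)} w with h' | ⟨z, ⟨e, he, hz⟩, hr⟩
    · rw [hGG] at h'
      exact h'.symm
    · rw [hGG] at hr
      simp only [Set.mem_singleton_iff] at he
      subst he
      rw [Sym2.mem_iff] at hz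
      rcases hz with rfl | rfl
      · exact hr.symm
      · exact h.trans hr.symm
  have key_ab : (G₁.deleteEdges {s(a, b), s(c, d)}).Reachable a d →
      (G₁.deleteEdges {s(a, b), s(c, d)}).Reachable a b := by
    intro h
    obtain ⟨w⟩ := hconn_ab.preconnected b a
    have hGG : (G₁.deleteEdges {s(a, b)}).deleteEdges {s(c, d)} =
        G₁.deleteEdges {s(a, b), s(c, d)} := by
      rw [deleteEdges_deleteEdges, Set.singleton_union]
    rcases walk_reach_del {s(c, d)} w with h' | ⟨z, ⟨e, he, hz⟩, hr⟩
    · rw [hGG] at h'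
      exact h'.symm
    · rw [hGG] at hr
      simp only [Set.mem_singleton_iff] at he
      subst he
      rw [Sym2.mem_iff] at hz
      rcases hz with rfl | rfl
      · exact hside.trans hr.symm
      · exact h.trans hr.symm
  have hnab : ¬ (G₁.deleteEdges {s(a, b), s(c, d)}).Reachable a b :=
    fun h => hdis (hconn_of h (key_ad h))
  have hnad : ¬ (G₁.deleteEdges {s(a, b), s(c, d)}).Reachable a d :=
    fun h => hdis (hconn_of (key_ab h) h)
  -- basic edges of the new graph
  have e_a0 : (parth2 G₁ a b c d).Adj (inl a) (inr 0) := adj_inl_inr0.2 (Or.inl rfl)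
  have e_b0 : (parth2 G₁ a b c d).Adj (inl b) (inr 0) := adj_inl_inr0.2 (Or.inr rfl)
  have e_c1 : (parth2 G₁ a b c d).Adj (inl c) (inr 1) := adj_inl_inr1.2 (Or.inl rfl)
  have e_d1 : (parth2 G₁ a b c d).Adj (inl d) (inr 1) := adj_inl_inr1.2 (Or.inr rfl)
  have e_01 : (parth2 G₁ a b c d).Adj (inr 0) (inr 1) := adj_inr_inr.2 (by decide)
  -- connectivity of the new graph
  have hconnD : (parth2 G₁ a b c d).Connected := by
    refine hub_conn habd _ (fun x y h => adj_inl_inl.2 h) (inr 0)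
      e_a0.reachable e_b0.reachable (e_d1.reachable.trans e_01.reachable.symm)
      (Reachable.refl _) e_01.reachable.symm
  refine ⟨hconnD, cubic_parth2 hc₁ hAdjab hAdjcd hac had hbc hbd, ?_⟩
  have e1ne2 : s((inl a : V₁ ⊕ Fin 2), inr 0) ≠ s(inl c, inr 1) := by
    simp [Sym2.eq_iff, hac]
  constructor
  · refine ⟨⟨_, Set.mem_insert _ _⟩, ?_, ?_, ?_, ?_⟩
    · rintro e he
      simp only [Set.mem_insert_iff, Set.mem_singleton_iff] at he
      rcases he with rfl | rfl
      · exact e_a0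
      · exact e_c1
    · refine (fun (_ : Std.Symm (fun e f : Sym2 (V₁ ⊕ Fin 2) => ∀ v, ¬(v ∈ e ∧ v ∈ f))) =>
        Set.pairwise_pair_of_symm.2) ⟨?_⟩ ?_
      · intro e f h v
        rw [and_comm]
        exact h v
      · intro _ v hv
        simp only [Sym2.mem_iff] at hv
        obtain ⟨hv1, hv2⟩ := hv
        rcases hv1 with rfl | rfl <;> rcases hv2 with h | h <;> simp_all
    · -- deleting both new edges disconnects
      intro hcon
      obtain ⟨w⟩ := hcon.preconnected (inl a) (inr 0)
      have := walk_pres (Sum.elim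
          (fun x => (G₁.deleteEdges {s(a, b), s(c, d)}).Reachable a x) (fun _ => False))
        ?_ w (Reachable.refl a)
      · exact this
      · rintro (x | i) (y | j) hadj hp
        · exact hp.trans (adj_inl_inl.1 (deleteEdges_adj.1 hadj).1).reachable
        · obtain ⟨hGD, hnotin⟩ := deleteEdges_adj.1 hadj
          rcases fin2_eq j with rfl | rfl
          · rcases adj_inl_inr0.1 hGD with rfl | rfl
            · exact hnotin (Set.mem_insert _ _)
            · exact hnab hp
          · rcases adj_inl_inr1.1 hGD with rfl | rfl
            · exact hnotin (by simp)
            · exact hnad hp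
        · exact hp.elim
        · exact hp.elim
    · -- minimality
      intro C'' hss
      have hC'' : C'' ⊆ {s((inl a : V₁ ⊕ Fin 2), inr 0)} ∨ C'' ⊆ {s((inl c : V₁ ⊕ Fin 2), inr 1)} := by
        by_cases h1 : s((inl a : V₁ ⊕ Fin 2), inr 0) ∈ C''
        · by_cases h2 : s((inl c : V₁ ⊕ Fin 2), inr 1) ∈ C''
          · exfalso
            refine hss.2 ?_
            rintro e he
            simp only [Set.mem_insert_iff, Set.mem_singleton_iff] at he
            rcases he with rfl | rfl
            · exact h1
            · exact h2
          · left
            intro e he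
            rcases hss.1 he with h | h
            · exact h
            · exact absurd (h ▸ he) h2
        · right
          intro e he
          rcases hss.1 he with h | h
          · exact absurd (h ▸ he) h1
          · exact h
      have hmono : ∀ S : Set (Sym2 (V₁ ⊕ Fin 2)), C'' ⊆ S →
          ((parth2 G₁ a b c d).deleteEdges S).Connected →
          ((parth2 G₁ a b c d).deleteEdges C'').Connected := by
        intro S hsubS hco
        refine hco.mono (fun v w h => ?_)
        obtain ⟨h1, h2⟩ := deleteEdges_adj.1 h
        exact deleteEdges_adj.2 ⟨h1, fun hm => h2 (hsubS hm)⟩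
      have conn1 : ((parth2 G₁ a b c d).deleteEdges {s((inl a : V₁ ⊕ Fin 2), inr 0)}).Connected := by
        have hAdj' : ∀ x y, (G₁.deleteEdges {s(a, b), s(c, d)}).Adj x y →
            ((parth2 G₁ a b c d).deleteEdges {s((inl a : V₁ ⊕ Fin 2), inr 0)}).Adj (inl x) (inl y) := by
          intro x y h
          exact deleteEdges_adj.2 ⟨adj_inl_inl.2 h, by simp [Sym2.eq_iff]⟩
        have lift : ∀ x y : V₁, (G₁.deleteEdges {s(a, b), s(c, d)}).Reachable x y →
            ((parth2 G₁ a b c d).deleteEdges {s((inl a : V₁ ⊕ Fin 2), inr 0)}).Reachable (inl x) (inl y) :=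
          fun x y h => Reachable.map ⟨Sum.inl, fun h' => hAdj' _ _ h'⟩ h
        have ec1 : ((parth2 G₁ a b c d).deleteEdges {s((inl a : V₁ ⊕ Fin 2), inr 0)}).Adj (inl c) (inr 1) :=
          deleteEdges_adj.2 ⟨e_c1, by simp [Sym2.eq_iff, hac.symm]⟩
        have eb0 : ((parth2 G₁ a b c d).deleteEdges {s((inl a : V₁ ⊕ Fin 2), inr 0)}).Adj (inl b) (inr 0) :=
          deleteEdges_adj.2 ⟨e_b0, by simp [Sym2.eq_iff, hab.symm]⟩
        have ed1 : ((parth2 G₁ a b c d).deleteEdges {s((inl a : V₁ ⊕ Fin 2), inr 0)}).Adj (inl d) (inr 1) :=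
          deleteEdges_adj.2 ⟨e_d1, by simp [Sym2.eq_iff, had.symm]⟩
        have e01 : ((parth2 G₁ a b c d).deleteEdges {s((inl a : V₁ ⊕ Fin 2), inr 0)}).Adj (inr 0) (inr 1) :=
          deleteEdges_adj.2 ⟨e_01, by simp [Sym2.eq_iff]⟩
        exact hub_conn habd _ hAdj' (inr 1)
          ((lift a c hside).trans ec1.reachable)
          (eb0.reachable.trans e01.reachable)
          ed1.reachable e01.reachable (Reachable.refl _)
      have conn2 : ((parth2 G₁ a b c d).deleteEdges {s((inl c : V₁ ⊕ Fin 2), inr 1)}).Connected := by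
        have hAdj' : ∀ x y, (G₁.deleteEdges {s(a, b), s(c, d)}).Adj x y →
            ((parth2 G₁ a b c d).deleteEdges {s((inl c : V₁ ⊕ Fin 2), inr 1)}).Adj (inl x) (inl y) := by
          intro x y h
          exact deleteEdges_adj.2 ⟨adj_inl_inl.2 h, by simp [Sym2.eq_iff]⟩
        have ea0 : ((parth2 G₁ a b c d).deleteEdges {s((inl c : V₁ ⊕ Fin 2), inr 1)}).Adj (inl a) (inr 0) :=
          deleteEdges_adj.2 ⟨e_a0, by simp [Sym2.eq_iff, hac]⟩
        have eb0 : ((parth2 G₁ a b c d).deleteEdges {s((inl c : V₁ ⊕ Fin 2), inr 1)}).Adj (inl b) (inr 0) :=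
          deleteEdges_adj.2 ⟨e_b0, by simp [Sym2.eq_iff, hbc]⟩
        have ed1 : ((parth2 G₁ a b c d).deleteEdges {s((inl c : V₁ ⊕ Fin 2), inr 1)}).Adj (inl d) (inr 1) :=
          deleteEdges_adj.2 ⟨e_d1, by simp [Sym2.eq_iff, hcd.symm]⟩
        have e01 : ((parth2 G₁ a b c d).deleteEdges {s((inl c : V₁ ⊕ Fin 2), inr 1)}).Adj (inr 0) (inr 1) :=
          deleteEdges_adj.2 ⟨e_01, by simp [Sym2.eq_iff]⟩
        exact hub_conn habd _ hAdj' (inr 0)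
          ea0.reachable eb0.reachable
          (ed1.reachable.trans e01.reachable.symm)
          (Reachable.refl _) e01.reachable.symm
      rcases hC'' with h | h
      · exact hmono _ h conn1
      · exact hmono _ h conn2
  · exact Set.ncard_pair e1ne2
end

section
/- Let ΓD be a connected cubic graph with a bridge (v1,v2), where the other two neighbours of v1 are a and b and the other two neighbours of v2 are c and d. Suppose (a,b) is not an edge of ΓD and (c,d) is not an edge of ΓD. Then the graph obtained from ΓD by deleting the vertices v1 and v2 (together with their incident edges) and adding the edges (a,b) and (c,d) has exactly two connected components, each of which is a connected cubic graph. -/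
open SimpleGraph

/-- Delete the vertices v₁ and v₂ (with their incident edges) and add the edges
(a,b) and (c,d). -/
def removeBridgePair {V : Type*} (G : SimpleGraph V) (v₁ v₂ a b c d : V) :
    SimpleGraph {x : V // x ≠ v₁ ∧ x ≠ v₂} :=
  SimpleGraph.fromRel (fun p q =>
    G.Adj p.1 q.1 ∨ (p.1 = a ∧ q.1 = b) ∨ (p.1 = c ∧ q.1 = d))

private lemma aux_reach_or {V : Type*} (G : SimpleGraph V) (v₁ v₂ x : V)
    (h : G.Reachable x v₁) :
    (G.deleteEdges {s(v₁, v₂)}).Reachable x v₁ ∨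
      (G.deleteEdges {s(v₁, v₂)}).Reachable x v₂ := by
  obtain ⟨w⟩ := h
  induction w with
  | nil => exact Or.inl (Reachable.refl _)
  | @cons u y q hadj w ih =>
    by_cases he : s(u, y) = s(q, v₂)
    · rcases Sym2.eq_iff.mp he with ⟨rfl, rfl⟩ | ⟨rfl, rfl⟩
      · exact Or.inl (Reachable.refl _)
      · exact Or.inr (Reachable.refl _)
    · have hadj' : (G.deleteEdges {s(q, v₂)}).Adj u y := by
        rw [deleteEdges_adj]
        exact ⟨hadj, by simpa using he⟩
      rcases ih with h | h
      · exact Or.inl (hadj'.reachable.trans h)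
      · exact Or.inr (hadj'.reachable.trans h)

private lemma aux_walk_reach {V : Type*} {G : SimpleGraph V} {v₁ v₂ : V}
    {W : Type*} {H : SimpleGraph W} (f : ∀ x : V, x ≠ v₁ → x ≠ v₂ → W) (A : W)
    (hstep : ∀ x y hx1 hx2 hy1 hy2, G.Adj x y → H.Adj (f x hx1 hx2) (f y hy1 hy2))
    (hlast : ∀ x hx1 hx2, G.Adj x v₁ → H.Reachable (f x hx1 hx2) A) :
    ∀ (p q : V) (w : G.Walk p q), v₂ ∉ w.support → q = v₁ →
      ∀ (h1 : p ≠ v₁) (h2 : p ≠ v₂), H.Reachable (f p h1 h2) A := by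
  intro p q w
  induction w with
  | nil => intro _ hq h1 _; exact absurd hq h1
  | @cons u y q hadj w ih =>
    intro hs hq h1 h2
    subst hq
    rw [Walk.support_cons, List.mem_cons] at hs
    push_neg at hs
    have hy2 : y ≠ v₂ := fun e => hs.2 (e ▸ w.start_mem_support)
    by_cases hy1 : y = q
    · exact hlast u h1 h2 (hy1 ▸ hadj)
    · exact (hstep u y h1 h2 hy1 hy2 hadj).reachable.trans (ih hs.2 rfl hy1 hy2)

private lemma aux_out {V W : Type*} {H : SimpleGraph W} {G' : SimpleGraph V} (g : W → V)
    (hstep : ∀ x y, H.Adj x y → G'.Reachable (g x) (g y)) :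
    ∀ (p q : W), H.Reachable p q → G'.Reachable (g p) (g q) := by
  intro p q h
  obtain ⟨w⟩ := h
  induction w with
  | nil => exact Reachable.refl _
  | cons h w ih => exact (hstep _ _ h).trans ih

/-- the inverse of a type 1 breeding operation. Deleting the two
endpoints of a bridge (v₁,v₂), whose other neighbours are a,b and c,d respectively,
and adding the edges (a,b), (c,d) yields a graph with exactly two connected
components, each of which is a connected cubic graph. -/
theorem inverse_breed1_spec {V : Type*} (G : SimpleGraph V)
    (hG : G.Connected) (hcub : IsCubic G) (v₁ v₂ a b c d : V)
    (hbr : G.IsBridge s(v₁, v₂))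
    (h1a : G.Adj v₁ a) (h1b : G.Adj v₁ b) (hab : a ≠ b) (hav : a ≠ v₂) (hbv : b ≠ v₂)
    (h2c : G.Adj v₂ c) (h2d : G.Adj v₂ d) (hcd : c ≠ d) (hcv : c ≠ v₁) (hdv : d ≠ v₁)
    (hnab : ¬ G.Adj a b) (hncd : ¬ G.Adj c d) :
    Nat.card (removeBridgePair G v₁ v₂ a b c d).ConnectedComponent = 2 ∧
      IsCubic (removeBridgePair G v₁ v₂ a b c d) := by
  classical
  have hadj12 : G.Adj v₁ v₂ := by
    by_contra h
    apply hbr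
    rw [show G.deleteEdges {s(v₁, v₂)} = G from by
      ext x y
      rw [deleteEdges_adj]
      refine ⟨fun h' => h'.1, fun h' => ⟨h', ?_⟩⟩
      intro he
      simp at he
      rcases he with ⟨rfl, rfl⟩ | ⟨rfl, rfl⟩
      exacts [h h', h h'.symm]]
    exact hG.preconnected v₁ v₂
  have hnr : ¬ (G.deleteEdges {s(v₁, v₂)}).Reachable v₁ v₂ := isBridge_iff.mp hbr
  have han1 : a ≠ v₁ := h1a.ne'
  have hbn1 : b ≠ v₁ := h1b.ne'
  have hcn2 : c ≠ v₂ := h2c.ne'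
  have hdn2 : d ≠ v₂ := h2d.ne'
  have h12 : v₁ ≠ v₂ := hadj12.ne
  have hfin : ∀ x, (G.neighborSet x).Finite := by
    intro x
    by_contra h
    have h0 := Set.Infinite.ncard (s := G.neighborSet x) h
    rw [hcub x] at h0
    exact absurd h0 (by norm_num)
  have hN1 : G.neighborSet v₁ = {v₂, a, b} := by
    refine (Set.eq_of_subset_of_ncard_le ?_ ?_ (hfin v₁)).symm
    · intro x hx
      rcases hx with rfl | rfl | rfl
      · exact hadj12
      · exact h1a
      · exact h1b
    · rw [hcub v₁]
      rw [Set.ncard_eq_three.mpr ⟨v₂, a, b, fun h => hav h.symm, fun h => hbv h.symm, hab, rfl⟩]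
  have hN2 : G.neighborSet v₂ = {v₁, c, d} := by
    refine (Set.eq_of_subset_of_ncard_le ?_ ?_ (hfin v₂)).symm
    · intro x hx
      rcases hx with rfl | rfl | rfl
      · exact hadj12.symm
      · exact h2c
      · exact h2d
    · rw [hcub v₂]
      rw [Set.ncard_eq_three.mpr ⟨v₁, c, d, fun h => hcv h.symm, fun h => hdv h.symm, hcd, rfl⟩]
  have hmem1 : ∀ x, G.Adj v₁ x → x = v₂ ∨ x = a ∨ x = b := by
    intro x hx
    have : x ∈ G.neighborSet v₁ := hx
    rw [hN1] at this
    simpa using this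
  have hmem2 : ∀ x, G.Adj v₂ x → x = v₁ ∨ x = c ∨ x = d := by
    intro x hx
    have : x ∈ G.neighborSet v₂ := hx
    rw [hN2] at this
    simpa using this
  have hG'adj : ∀ {x y}, G.Adj x y → ¬(x = v₁ ∧ y = v₂) → ¬(x = v₂ ∧ y = v₁) →
      (G.deleteEdges {s(v₁, v₂)}).Adj x y := by
    intro x y h h1 h2
    rw [deleteEdges_adj]
    refine ⟨h, ?_⟩
    simp only [Set.mem_singleton_iff, Sym2.eq_iff]
    tauto
  have hG'a1 : (G.deleteEdges {s(v₁, v₂)}).Adj a v₁ :=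
    hG'adj h1a.symm (fun h => han1 h.1) (fun h => hav h.1)
  have hG'b1 : (G.deleteEdges {s(v₁, v₂)}).Adj b v₁ :=
    hG'adj h1b.symm (fun h => hbn1 h.1) (fun h => hbv h.1)
  have hG'c2 : (G.deleteEdges {s(v₁, v₂)}).Adj c v₂ :=
    hG'adj h2c.symm (fun h => hcv h.1) (fun h => hcn2 h.1)
  have hG'd2 : (G.deleteEdges {s(v₁, v₂)}).Adj d v₂ :=
    hG'adj h2d.symm (fun h => hdv h.1) (fun h => hdn2 h.1)
  have hac : a ≠ c := by
    rintro rfl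
    exact hnr (hG'a1.symm.reachable.trans hG'c2.reachable)
  have had : a ≠ d := by
    rintro rfl
    exact hnr (hG'a1.symm.reachable.trans hG'd2.reachable)
  have hbc : b ≠ c := by
    rintro rfl
    exact hnr (hG'b1.symm.reachable.trans hG'c2.reachable)
  have hbd : b ≠ d := by
    rintro rfl
    exact hnr (hG'b1.symm.reachable.trans hG'd2.reachable)
  have hnav2 : ¬ G.Adj a v₂ := by
    intro h
    rcases hmem2 a h.symm with h' | h' | h'
    exacts [han1 h', hac h', had h']
  have hnbv2 : ¬ G.Adj b v₂ := by
    intro h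
    rcases hmem2 b h.symm with h' | h' | h'
    exacts [hbn1 h', hbc h', hbd h']
  have hncv1 : ¬ G.Adj c v₁ := by
    intro h
    rcases hmem1 c h.symm with h' | h' | h'
    exacts [hcn2 h', hac h'.symm, hbc h'.symm]
  have hndv1 : ¬ G.Adj d v₁ := by
    intro h
    rcases hmem1 d h.symm with h' | h' | h'
    exacts [hdn2 h', had h'.symm, hbd h'.symm]
  have hHadj : ∀ p q : {x : V // x ≠ v₁ ∧ x ≠ v₂},
      (removeBridgePair G v₁ v₂ a b c d).Adj p q ↔
      (G.Adj p.1 q.1 ∨ (p.1 = a ∧ q.1 = b) ∨ (p.1 = b ∧ q.1 = a) ∨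
        (p.1 = c ∧ q.1 = d) ∨ (p.1 = d ∧ q.1 = c)) := by
    intro p q
    unfold removeBridgePair
    rw [fromRel_adj]
    constructor
    · rintro ⟨hne, h | h⟩
      · tauto
      · rcases h with h | h | h
        · exact Or.inl h.symm
        · exact Or.inr (Or.inr (Or.inl ⟨h.2, h.1⟩))
        · exact Or.inr (Or.inr (Or.inr (Or.inr ⟨h.2, h.1⟩)))
    · intro h
      rcases h with h | ⟨h1, h2⟩ | ⟨h1, h2⟩ | ⟨h1, h2⟩ | ⟨h1, h2⟩
      · exact ⟨fun e => h.ne (congrArg Subtype.val e), Or.inl (Or.inl h)⟩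
      · exact ⟨fun e => hab (by rw [← h1, ← h2]; exact congrArg Subtype.val e),
          Or.inl (Or.inr (Or.inl ⟨h1, h2⟩))⟩
      · exact ⟨fun e => hab (by rw [← h1, ← h2]; exact (congrArg Subtype.val e).symm),
          Or.inr (Or.inr (Or.inl ⟨h2, h1⟩))⟩
      · exact ⟨fun e => hcd (by rw [← h1, ← h2]; exact congrArg Subtype.val e),
          Or.inl (Or.inr (Or.inr ⟨h1, h2⟩))⟩
      · exact ⟨fun e => hcd (by rw [← h1, ← h2]; exact (congrArg Subtype.val e).symm),
          Or.inr (Or.inr (Or.inr ⟨h2, h1⟩))⟩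
  have hHG : ∀ (p q : {x : V // x ≠ v₁ ∧ x ≠ v₂}), G.Adj p.1 q.1 →
      (removeBridgePair G v₁ v₂ a b c d).Adj p q :=
    fun p q h => (hHadj p q).mpr (Or.inl h)
  have hHab : (removeBridgePair G v₁ v₂ a b c d).Adj ⟨a, han1, hav⟩ ⟨b, hbn1, hbv⟩ :=
    (hHadj _ _).mpr (Or.inr (Or.inl ⟨rfl, rfl⟩))
  have hHcd : (removeBridgePair G v₁ v₂ a b c d).Adj ⟨c, hcv, hcn2⟩ ⟨d, hdv, hdn2⟩ :=
    (hHadj _ _).mpr (Or.inr (Or.inr (Or.inr (Or.inl ⟨rfl, rfl⟩))))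
  have hout : ∀ p q : {x : V // x ≠ v₁ ∧ x ≠ v₂},
      (removeBridgePair G v₁ v₂ a b c d).Reachable p q →
      (G.deleteEdges {s(v₁, v₂)}).Reachable p.1 q.1 := by
    refine aux_out Subtype.val ?_
    intro x y hxy
    rcases (hHadj x y).mp hxy with h | ⟨h1, h2⟩ | ⟨h1, h2⟩ | ⟨h1, h2⟩ | ⟨h1, h2⟩
    · exact (hG'adj h (fun e => x.2.1 e.1) (fun e => x.2.2 e.1)).reachable
    · rw [h1, h2]; exact hG'a1.reachable.trans hG'b1.symm.reachable
    · rw [h1, h2]; exact hG'b1.reachable.trans hG'a1.symm.reachable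
    · rw [h1, h2]; exact hG'c2.reachable.trans hG'd2.symm.reachable
    · rw [h1, h2]; exact hG'd2.reachable.trans hG'c2.symm.reachable
  have hnrAC : ¬ (removeBridgePair G v₁ v₂ a b c d).Reachable ⟨a, han1, hav⟩ ⟨c, hcv, hcn2⟩ := by
    intro h
    exact hnr (hG'a1.symm.reachable.trans ((hout _ _ h).trans hG'c2.reachable))
  have key : ∀ x : {x : V // x ≠ v₁ ∧ x ≠ v₂},
      (removeBridgePair G v₁ v₂ a b c d).Reachable x ⟨a, han1, hav⟩ ∨
      (removeBridgePair G v₁ v₂ a b c d).Reachable x ⟨c, hcv, hcn2⟩ := by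
    intro x
    rcases aux_reach_or G v₁ v₂ x.1 (hG.preconnected x.1 v₁) with h | h
    · left
      obtain ⟨w⟩ := h
      have hv2 : v₂ ∉ w.support := by
        intro hm
        exact hnr ((Reachable.symm ⟨w⟩).trans ⟨w.takeUntil v₂ hm⟩)
      refine aux_walk_reach (G := G.deleteEdges {s(v₁, v₂)})
        (fun x h1 h2 => (⟨x, h1, h2⟩ : {x : V // x ≠ v₁ ∧ x ≠ v₂})) ⟨a, han1, hav⟩
        ?_ ?_ x.1 v₁ w hv2 rfl x.2.1 x.2.2
      · intro x y hx1 hx2 hy1 hy2 hxy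
        exact hHG _ _ ((deleteEdges_adj.mp hxy).1)
      · intro x hx1 hx2 hxy
        have hx : G.Adj v₁ x := (deleteEdges_adj.mp hxy).1.symm
        rcases hmem1 x hx with rfl | rfl | rfl
        · exact absurd rfl hx2
        · exact Reachable.refl _
        · exact hHab.symm.reachable
    · right
      obtain ⟨w⟩ := h
      have hv1 : v₁ ∉ w.support := by
        intro hm
        exact hnr (Reachable.symm ((Reachable.symm ⟨w⟩).trans ⟨w.takeUntil v₁ hm⟩))
      refine aux_walk_reach (v₁ := v₂) (v₂ := v₁) (G := G.deleteEdges {s(v₁, v₂)})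
        (fun x h1 h2 => (⟨x, h2, h1⟩ : {x : V // x ≠ v₁ ∧ x ≠ v₂})) ⟨c, hcv, hcn2⟩
        ?_ ?_ x.1 v₂ w hv1 rfl x.2.2 x.2.1
      · intro x y hx1 hx2 hy1 hy2 hxy
        exact hHG _ _ ((deleteEdges_adj.mp hxy).1)
      · intro x hx1 hx2 hxy
        have hx : G.Adj v₂ x := (deleteEdges_adj.mp hxy).1.symm
        rcases hmem2 x hx with rfl | rfl | rfl
        · exact absurd rfl hx2
        · exact Reachable.refl _
        · exact hHcd.symm.reachable
  constructor
  · rw [Nat.card_eq_two_iff]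
    refine ⟨(removeBridgePair G v₁ v₂ a b c d).connectedComponentMk ⟨a, han1, hav⟩,
      (removeBridgePair G v₁ v₂ a b c d).connectedComponentMk ⟨c, hcv, hcn2⟩,
      fun h => hnrAC (ConnectedComponent.exact h), ?_⟩
    rw [Set.eq_univ_iff_forall]
    intro z
    induction z using SimpleGraph.ConnectedComponent.ind with
    | _ v =>
      rcases key v with h | h
      · exact Or.inl (ConnectedComponent.sound h)
      · exact Or.inr (ConnectedComponent.sound h)
  · intro x
    rw [← Set.ncard_image_of_injective _ Subtype.val_injective]
    by_cases hxa : x.1 = a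
    · have himg : Subtype.val '' ((removeBridgePair G v₁ v₂ a b c d).neighborSet x)
          = insert b (G.neighborSet a \ {v₁}) := by
        ext y
        simp only [Set.mem_image, mem_neighborSet, Set.mem_insert_iff, Set.mem_diff,
          Set.mem_singleton_iff]
        constructor
        · rintro ⟨q, hq, rfl⟩
          rcases (hHadj x q).mp hq with h | ⟨h1, h2⟩ | ⟨h1, h2⟩ | ⟨h1, h2⟩ | ⟨h1, h2⟩
          · right; rw [hxa] at h; exact ⟨h, q.2.1⟩
          · exact Or.inl h2
          · exact absurd (hxa.symm.trans h1) hab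
          · exact absurd (hxa.symm.trans h1) hac
          · exact absurd (hxa.symm.trans h1) had
        · rintro (hyb | ⟨hy, hy1⟩)
          · exact ⟨⟨b, hbn1, hbv⟩, (hHadj _ _).mpr (Or.inr (Or.inl ⟨hxa, rfl⟩)), hyb.symm⟩
          · have hy2 : y ≠ v₂ := fun e => hnav2 (e ▸ hy)
            exact ⟨⟨y, hy1, hy2⟩, (hHadj _ _).mpr (Or.inl (by rw [hxa]; exact hy)), rfl⟩
      rw [himg, Set.ncard_insert_of_notMem (fun hb => hnab hb.1) (hfin a).diff,
        Set.ncard_diff_singleton_of_mem (show v₁ ∈ G.neighborSet a from h1a.symm), hcub a]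
    · by_cases hxb : x.1 = b
      · have himg : Subtype.val '' ((removeBridgePair G v₁ v₂ a b c d).neighborSet x)
            = insert a (G.neighborSet b \ {v₁}) := by
          ext y
          simp only [Set.mem_image, mem_neighborSet, Set.mem_insert_iff, Set.mem_diff,
            Set.mem_singleton_iff]
          constructor
          · rintro ⟨q, hq, rfl⟩
            rcases (hHadj x q).mp hq with h | ⟨h1, h2⟩ | ⟨h1, h2⟩ | ⟨h1, h2⟩ | ⟨h1, h2⟩
            · right; rw [hxb] at h; exact ⟨h, q.2.1⟩
            · exact absurd (hxb.symm.trans h1).symm hab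
            · exact Or.inl h2
            · exact absurd (hxb.symm.trans h1) hbc
            · exact absurd (hxb.symm.trans h1) hbd
          · rintro (hyb | ⟨hy, hy1⟩)
            · exact ⟨⟨a, han1, hav⟩, (hHadj _ _).mpr (Or.inr (Or.inr (Or.inl ⟨hxb, rfl⟩))), hyb.symm⟩
            · have hy2 : y ≠ v₂ := fun e => hnbv2 (e ▸ hy)
              exact ⟨⟨y, hy1, hy2⟩, (hHadj _ _).mpr (Or.inl (by rw [hxb]; exact hy)), rfl⟩
        rw [himg, Set.ncard_insert_of_notMem (fun ha => hnab (Adj.symm ha.1)) (hfin b).diff,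
          Set.ncard_diff_singleton_of_mem (show v₁ ∈ G.neighborSet b from h1b.symm), hcub b]
      · by_cases hxc : x.1 = c
        · have himg : Subtype.val '' ((removeBridgePair G v₁ v₂ a b c d).neighborSet x)
              = insert d (G.neighborSet c \ {v₂}) := by
            ext y
            simp only [Set.mem_image, mem_neighborSet, Set.mem_insert_iff, Set.mem_diff,
              Set.mem_singleton_iff]
            constructor
            · rintro ⟨q, hq, rfl⟩
              rcases (hHadj x q).mp hq with h | ⟨h1, h2⟩ | ⟨h1, h2⟩ | ⟨h1, h2⟩ | ⟨h1, h2⟩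
              · right; rw [hxc] at h; exact ⟨h, q.2.2⟩
              · exact absurd (hxc.symm.trans h1).symm hac
              · exact absurd (hxc.symm.trans h1).symm hbc
              · exact Or.inl h2
              · exact absurd (hxc.symm.trans h1) hcd
            · rintro (hyb | ⟨hy, hy2⟩)
              · exact ⟨⟨d, hdv, hdn2⟩,
                  (hHadj _ _).mpr (Or.inr (Or.inr (Or.inr (Or.inl ⟨hxc, rfl⟩)))), hyb.symm⟩
              · have hy1 : y ≠ v₁ := fun e => hncv1 (e ▸ hy)
                exact ⟨⟨y, hy1, hy2⟩, (hHadj _ _).mpr (Or.inl (by rw [hxc]; exact hy)), rfl⟩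
          rw [himg, Set.ncard_insert_of_notMem (fun hd => hncd hd.1) (hfin c).diff,
            Set.ncard_diff_singleton_of_mem (show v₂ ∈ G.neighborSet c from h2c.symm), hcub c]
        · by_cases hxd : x.1 = d
          · have himg : Subtype.val '' ((removeBridgePair G v₁ v₂ a b c d).neighborSet x)
                = insert c (G.neighborSet d \ {v₂}) := by
              ext y
              simp only [Set.mem_image, mem_neighborSet, Set.mem_insert_iff, Set.mem_diff,
                Set.mem_singleton_iff]
              constructor
              · rintro ⟨q, hq, rfl⟩
                rcases (hHadj x q).mp hq with h | ⟨h1, h2⟩ | ⟨h1, h2⟩ | ⟨h1, h2⟩ | ⟨h1, h2⟩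
                · right; rw [hxd] at h; exact ⟨h, q.2.2⟩
                · exact absurd (hxd.symm.trans h1).symm had
                · exact absurd (hxd.symm.trans h1).symm hbd
                · exact absurd (hxd.symm.trans h1).symm hcd
                · exact Or.inl h2
              · rintro (hyb | ⟨hy, hy2⟩)
                · exact ⟨⟨c, hcv, hcn2⟩,
                    (hHadj _ _).mpr (Or.inr (Or.inr (Or.inr (Or.inr ⟨hxd, rfl⟩)))), hyb.symm⟩
                · have hy1 : y ≠ v₁ := fun e => hndv1 (e ▸ hy)
                  exact ⟨⟨y, hy1, hy2⟩, (hHadj _ _).mpr (Or.inl (by rw [hxd]; exact hy)), rfl⟩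
            rw [himg, Set.ncard_insert_of_notMem (fun hc => hncd (Adj.symm hc.1)) (hfin d).diff,
              Set.ncard_diff_singleton_of_mem (show v₂ ∈ G.neighborSet d from h2d.symm), hcub d]
          · have himg : Subtype.val '' ((removeBridgePair G v₁ v₂ a b c d).neighborSet x)
                = G.neighborSet x.1 := by
              ext y
              simp only [Set.mem_image, mem_neighborSet]
              constructor
              · rintro ⟨q, hq, rfl⟩
                rcases (hHadj x q).mp hq with h | ⟨h1, h2⟩ | ⟨h1, h2⟩ | ⟨h1, h2⟩ | ⟨h1, h2⟩
                · exact h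
                · exact absurd h1 hxa
                · exact absurd h1 hxb
                · exact absurd h1 hxc
                · exact absurd h1 hxd
              · intro hy
                have hy1 : y ≠ v₁ := by
                  rintro rfl
                  rcases hmem1 x.1 hy.symm with h | h | h
                  exacts [x.2.2 h, hxa h, hxb h]
                have hy2 : y ≠ v₂ := by
                  rintro rfl
                  rcases hmem2 x.1 hy.symm with h | h | h
                  exacts [x.2.1 h, hxc h, hxd h]
                exact ⟨⟨y, hy1, hy2⟩, (hHadj _ _).mpr (Or.inl hy), rfl⟩
            rw [himg]
            exact hcub x.1
end

section
/- Let ΓD be a connected cubic graph containing a 2-cracker {(v1,v2), (v3,v4)}, where v1 and v3 lie in the same connected component S1 of ΓD minus the two cracker edges, and v2 and v4 lie in the other component S2. Suppose (v1,v3) is not an edge of ΓD and (v2,v4) is not an edge of ΓD. Then the graph obtained from S1 by adding the edge (v1,v3) is a connected cubic graph, and the graph obtained from S2 by adding the edge (v2,v4) is a connected cubic graph. -/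
open SimpleGraph

/-- The connected component of r in G', viewed as a graph, with an extra edge (p,q)
added. -/
def sideGraph {V : Type*} (G' : SimpleGraph V) (r p q : V) :
    SimpleGraph {x : V // G'.Reachable r x} :=
  SimpleGraph.fromRel (fun u w => G'.Adj u.1 w.1 ∨ (u.1 = p ∧ w.1 = q))

lemma side_adj {V : Type*} (G' : SimpleGraph V) (r p q : V) (u w : {x // G'.Reachable r x}) :
    (sideGraph G' r p q).Adj u w ↔
      u.1 ≠ w.1 ∧ (G'.Adj u.1 w.1 ∨ (u.1 = p ∧ w.1 = q) ∨ (u.1 = q ∧ w.1 = p)) := by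
  simp only [sideGraph, fromRel_adj, ne_eq, Subtype.ext_iff]
  constructor
  · rintro ⟨h1, (h|h)|(h|h)⟩
    exacts [⟨h1,Or.inl h⟩, ⟨h1, Or.inr (Or.inl h)⟩, ⟨h1, Or.inl h.symm⟩,
      ⟨h1, Or.inr (Or.inr ⟨h.2,h.1⟩)⟩]
  · rintro ⟨h1, (h|h|h)⟩
    exacts [⟨h1, Or.inl (Or.inl h)⟩, ⟨h1, Or.inl (Or.inr h)⟩, ⟨h1, Or.inr (Or.inr ⟨h.2,h.1⟩)⟩]

lemma side_reach {V : Type*} (G' : SimpleGraph V) (r p q : V) :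
    ∀ {y x : V} (pw : G'.Walk y x) (hy : G'.Reachable r y),
      (sideGraph G' r p q).Reachable ⟨y, hy⟩ ⟨x, hy.trans pw.reachable⟩ := by
  intro y x pw
  induction pw with
  | nil => intro hy; rfl
  | cons h pw ih =>
    intro hy
    refine (SimpleGraph.Adj.reachable ?_).trans (ih (hy.trans h.reachable))
    rw [side_adj]
    exact ⟨h.ne, Or.inl h⟩

lemma side_connected {V : Type*} (G' : SimpleGraph V) (r p q : V) :
    (sideGraph G' r p q).Connected := by
  haveI : Nonempty {x // G'.Reachable r x} := ⟨⟨r, Reachable.refl r⟩⟩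
  refine ⟨fun x y => ?_⟩
  have hx : (sideGraph G' r p q).Reachable ⟨r, Reachable.refl r⟩ x := by
    obtain ⟨w⟩ := x.2
    exact side_reach G' r p q w (Reachable.refl r)
  have hy : (sideGraph G' r p q).Reachable ⟨r, Reachable.refl r⟩ y := by
    obtain ⟨w⟩ := y.2
    exact side_reach G' r p q w (Reachable.refl r)
  exact hx.symm.trans hy

lemma side_cubic {V : Type*} (G : SimpleGraph V) (hcub : IsCubic G) (a b c d : V)
    (hab : G.Adj a b) (hcd : G.Adj c d)
    (hac : a ≠ c) (had : a ≠ d) (hbc : b ≠ c) (hbd : b ≠ d)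
    (hreach : (G.deleteEdges {s(a,b),s(c,d)}).Reachable a c)
    (hnb : ¬ (G.deleteEdges {s(a,b),s(c,d)}).Reachable a b)
    (hnd : ¬ (G.deleteEdges {s(a,b),s(c,d)}).Reachable a d)
    (hnac : ¬ G.Adj a c) :
    IsCubic (sideGraph (G.deleteEdges {s(a,b),s(c,d)}) a a c) := by
  set G' := G.deleteEdges {s(a,b),s(c,d)} with hG'
  have hfin : ∀ u : V, (G.neighborSet u).Finite := by
    intro u
    by_contra h
    have h0 : (G.neighborSet u).ncard = 0 := Set.Infinite.ncard h
    rw [hcub u] at h0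
    exact three_ne_zero h0
  have hG'adj : ∀ u w : V, G'.Adj u w ↔ G.Adj u w ∧
      ¬((u=a∧w=b)∨(u=b∧w=a)∨(u=c∧w=d)∨(u=d∧w=c)) := by
    intro u w
    rw [hG', deleteEdges_adj]
    simp [Sym2.eq_iff]
    tauto
  have himg : ∀ (x : {v // G'.Reachable a v}) (w : V),
      w ∈ Subtype.val '' ((sideGraph G' a a c).neighborSet x) ↔
        ∃ hw : G'.Reachable a w, (sideGraph G' a a c).Adj x ⟨w, hw⟩ := by
    intro x w
    constructor
    · rintro ⟨⟨w', hw'⟩, hadj, rfl⟩; exact ⟨hw', hadj⟩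
    · rintro ⟨hw, hadj⟩; exact ⟨⟨w, hw⟩, hadj, rfl⟩
  intro x
  rw [← Set.ncard_image_of_injective _ Subtype.val_injective]
  rcases eq_or_ne x.1 a with hxa | hxa
  · have himage : Subtype.val '' ((sideGraph G' a a c).neighborSet x)
        = insert c (G.neighborSet a \ {b}) := by
      ext w
      rw [himg]
      constructor
      · rintro ⟨hw, hadj⟩
        rw [side_adj, hxa] at hadj
        obtain ⟨hne, hor | hor | hor⟩ := hadj
        · rw [hG'adj] at hor
          right
          refine ⟨hor.1, ?_⟩
          simp only [Set.mem_singleton_iff]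
          intro hwb; subst hwb
          exact hor.2 (Or.inl ⟨rfl, rfl⟩)
        · left; exact hor.2
        · exact absurd hor.1 hac
      · rintro (rfl | ⟨hw, hwb⟩)
        · refine ⟨hreach, ?_⟩
          rw [side_adj, hxa]
          exact ⟨hac, Or.inr (Or.inl ⟨rfl, rfl⟩)⟩
        · simp only [Set.mem_singleton_iff] at hwb
          have hadj' : G'.Adj a w := by
            rw [hG'adj]
            refine ⟨hw, ?_⟩
            rintro (⟨-, rfl⟩ | ⟨rfl, -⟩ | ⟨rfl, -⟩ | ⟨rfl, -⟩)
            exacts [hwb rfl, G.irrefl hab, hac rfl, had rfl]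
          refine ⟨hadj'.reachable, ?_⟩
          rw [side_adj, hxa]
          exact ⟨hadj'.ne, Or.inl hadj'⟩
    have hb : b ∈ G.neighborSet a := hab
    rw [himage, Set.ncard_insert_of_notMem (fun hc => hnac hc.1) ((hfin a).diff (t := {b})),
      Set.ncard_diff_singleton_of_mem hb, hcub a]
  rcases eq_or_ne x.1 c with hxc | hxc
  · have himage : Subtype.val '' ((sideGraph G' a a c).neighborSet x)
        = insert a (G.neighborSet c \ {d}) := by
      ext w
      rw [himg]
      constructor
      · rintro ⟨hw, hadj⟩
        rw [side_adj, hxc] at hadj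
        obtain ⟨hne, hor | hor | hor⟩ := hadj
        · rw [hG'adj] at hor
          right
          refine ⟨hor.1, ?_⟩
          simp only [Set.mem_singleton_iff]
          intro hwd; subst hwd
          exact hor.2 (Or.inr (Or.inr (Or.inl ⟨rfl, rfl⟩)))
        · exact absurd hor.1 hac.symm
        · left; exact hor.2
      · rintro (h | ⟨hw, hwd⟩)
        · subst h
          refine ⟨Reachable.refl w, ?_⟩
          rw [side_adj, hxc]
          exact ⟨hac.symm, Or.inr (Or.inr ⟨rfl, rfl⟩)⟩
        · simp only [Set.mem_singleton_iff] at hwd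
          have hadj' : G'.Adj c w := by
            rw [hG'adj]
            refine ⟨hw, ?_⟩
            rintro (⟨rfl, -⟩ | ⟨rfl, -⟩ | ⟨-, rfl⟩ | ⟨rfl, -⟩)
            exacts [hac rfl, hbc rfl, hwd rfl, G.irrefl hcd]
          refine ⟨hreach.trans hadj'.reachable, ?_⟩
          rw [side_adj, hxc]
          exact ⟨hadj'.ne, Or.inl hadj'⟩
    have hd : d ∈ G.neighborSet c := hcd
    rw [himage, Set.ncard_insert_of_notMem (fun hc' => hnac hc'.1.symm) ((hfin c).diff (t := {d})),
      Set.ncard_diff_singleton_of_mem hd, hcub c]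
  · have hxb : x.1 ≠ b := fun h => hnb (h ▸ x.2)
    have hxd : x.1 ≠ d := fun h => hnd (h ▸ x.2)
    have himage : Subtype.val '' ((sideGraph G' a a c).neighborSet x)
        = G.neighborSet x.1 := by
      ext w
      rw [himg]
      constructor
      · rintro ⟨hw, hadj⟩
        rw [side_adj] at hadj
        obtain ⟨hne, hor | hor | hor⟩ := hadj
        · exact ((hG'adj _ _).mp hor).1
        · exact absurd hor.1 hxa
        · exact absurd hor.1 hxc
      · intro hw
        have hadj' : G'.Adj x.1 w := by
          rw [hG'adj]
          refine ⟨hw, ?_⟩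
          rintro (⟨h, -⟩ | ⟨h, -⟩ | ⟨h, -⟩ | ⟨h, -⟩)
          exacts [hxa h, hxb h, hxc h, hxd h]
        refine ⟨x.2.trans hadj'.reachable, ?_⟩
        rw [side_adj]
        exact ⟨hadj'.ne, Or.inl hadj'⟩
    rw [himage, hcub x.1]

/-- the inverse of a type 2 breeding operation. If {(v₁,v₂),(v₃,v₄)} is a
2-cracker of a connected cubic graph, with v₁,v₃ on one side and v₂,v₄ on the other,
and neither (v₁,v₃) nor (v₂,v₄) is an edge, then each side together with the
corresponding added edge is a connected cubic graph. -/
theorem inverse_breed2_spec {V : Type*} (G : SimpleGraph V)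
    (hG : G.Connected) (hcub : IsCubic G) (v₁ v₂ v₃ v₄ : V)
    (hcr : IsKCracker G {s(v₁, v₂), s(v₃, v₄)} 2)
    (h13 : (G.deleteEdges {s(v₁, v₂), s(v₃, v₄)}).Reachable v₁ v₃)
    (h24 : (G.deleteEdges {s(v₁, v₂), s(v₃, v₄)}).Reachable v₂ v₄)
    (h12 : ¬ (G.deleteEdges {s(v₁, v₂), s(v₃, v₄)}).Reachable v₁ v₂)
    (hn13 : ¬ G.Adj v₁ v₃) (hn24 : ¬ G.Adj v₂ v₄) :
    (sideGraph (G.deleteEdges {s(v₁, v₂), s(v₃, v₄)}) v₁ v₁ v₃).Connected ∧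
      IsCubic (sideGraph (G.deleteEdges {s(v₁, v₂), s(v₃, v₄)}) v₁ v₁ v₃) ∧
      (sideGraph (G.deleteEdges {s(v₁, v₂), s(v₃, v₄)}) v₂ v₂ v₄).Connected ∧
      IsCubic (sideGraph (G.deleteEdges {s(v₁, v₂), s(v₃, v₄)}) v₂ v₂ v₄) := by
  obtain ⟨⟨-, hsub, hpw, -, -⟩, hcard⟩ := hcr
  have hab : G.Adj v₁ v₂ := by
    rw [← mem_edgeSet]; exact hsub (Set.mem_insert _ _)
  have hcd : G.Adj v₃ v₄ := by
    rw [← mem_edgeSet]; exact hsub (Set.mem_insert_of_mem _ rfl)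
  have hef : s(v₁, v₂) ≠ s(v₃, v₄) := by
    intro h
    rw [h, Set.pair_eq_singleton, Set.ncard_singleton] at hcard
    omega
  have hkey := hpw (Set.mem_insert _ _) (Set.mem_insert_of_mem _ rfl) hef
  have h13' : v₁ ≠ v₃ := fun h => hkey v₁ ⟨Sym2.mem_mk_left _ _, h ▸ Sym2.mem_mk_left _ _⟩
  have h14' : v₁ ≠ v₄ := fun h => hkey v₁ ⟨Sym2.mem_mk_left _ _, h ▸ Sym2.mem_mk_right _ _⟩
  have h23' : v₂ ≠ v₃ := fun h => hkey v₂ ⟨Sym2.mem_mk_right _ _, h ▸ Sym2.mem_mk_left _ _⟩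
  have h24' : v₂ ≠ v₄ := fun h => hkey v₂ ⟨Sym2.mem_mk_right _ _, h ▸ Sym2.mem_mk_right _ _⟩
  have hnd1 : ¬ (G.deleteEdges {s(v₁, v₂), s(v₃, v₄)}).Reachable v₁ v₄ :=
    fun h => h12 (h.trans h24.symm)
  have hset : ({s(v₂, v₁), s(v₄, v₃)} : Set (Sym2 V)) = {s(v₁, v₂), s(v₃, v₄)} := by
    rw [Sym2.eq_swap, @Sym2.eq_swap _ v₄ v₃]
  have hreach2 : (G.deleteEdges {s(v₂, v₁), s(v₄, v₃)}).Reachable v₂ v₄ := by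
    rw [hset]; exact h24
  have hnb2 : ¬ (G.deleteEdges {s(v₂, v₁), s(v₄, v₃)}).Reachable v₂ v₁ := by
    rw [hset]; exact fun h => h12 h.symm
  have hnd2 : ¬ (G.deleteEdges {s(v₂, v₁), s(v₄, v₃)}).Reachable v₂ v₃ := by
    rw [hset]; exact fun h => h12 (h13.trans h.symm)
  have h2 := side_cubic G hcub v₂ v₁ v₄ v₃ hab.symm hcd.symm h24' h23' h14' h13'
    hreach2 hnb2 hnd2 hn24
  rw [hset] at h2
  exact ⟨side_connected _ _ _ _,
    side_cubic G hcub v₁ v₂ v₃ v₄ hab hcd h13' h14' h23' h24' h13 h12 hnd1 hn13,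
    side_connected _ _ _ _, h2⟩
end

section
/- Let ΓD be a connected cubic graph containing a 3-cracker {(v1,v2), (v3,v4), (v5,v6)}, where v1, v3, v5 lie in one connected component S1 of ΓD minus the three cracker edges, and v2, v4, v6 lie in the other component S2. Then the graph obtained from S1 by adding a new vertex adjacent to exactly v1, v3 and v5 is a connected cubic graph, and the graph obtained from S2 by adding a new vertex adjacent to exactly v2, v4 and v6 is a connected cubic graph. -/
open SimpleGraph

/-- The connected component of r in G', viewed as a graph, with a new vertex added
that is adjacent to exactly p, q and w. -/
def sideGraphPlusVertex {V : Type*} (G' : SimpleGraph V) (r p q w : V) :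
    SimpleGraph ({x : V // G'.Reachable r x} ⊕ Unit) :=
  SimpleGraph.fromRel (fun u u' =>
    (∃ x y : {x : V // G'.Reachable r x}, u = Sum.inl x ∧ u' = Sum.inl y ∧ G'.Adj x.1 y.1) ∨
    (∃ x : {x : V // G'.Reachable r x}, u = Sum.inl x ∧ u' = Sum.inr () ∧
      (x.1 = p ∨ x.1 = q ∨ x.1 = w)))

lemma nbr_delete_eq_diff {V : Type*} (G : SimpleGraph V) (C : Set (Sym2 V)) (a b : V)
    (hC : ∀ y, s(a,y) ∈ C ↔ y = b) :
    (G.deleteEdges C).neighborSet a = G.neighborSet a \ {b} := by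
  ext y
  simp only [mem_neighborSet, deleteEdges_adj, hC, Set.mem_diff, Set.mem_singleton_iff]

lemma nbr_delete_eq {V : Type*} (G : SimpleGraph V) (C : Set (Sym2 V)) (a : V)
    (hC : ∀ y, s(a,y) ∉ C) :
    (G.deleteEdges C).neighborSet a = G.neighborSet a := by
  ext y
  simp [deleteEdges_adj, hC]

lemma three_distinct {α : Type*} {a b c : α} (h : ({a,b,c} : Set α).ncard = 3) :
    a ≠ b ∧ a ≠ c ∧ b ≠ c := by
  have h2 : ∀ x y : α, ({x,y} : Set α).ncard ≤ 2 :=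
    fun x y => le_trans (Set.ncard_insert_le _ _) (by simp)
  refine ⟨?_, ?_, ?_⟩ <;> rintro rfl
  · rw [show ({a,a,c} : Set α) = {a,c} by simp] at h
    have := h2 a c; omega
  · rw [show ({a,b,a} : Set α) = {a,b} by ext x; simp; tauto] at h
    have := h2 a b; omega
  · rw [show ({a,b,b} : Set α) = {a,b} by simp] at h
    have := h2 a b; omega

section Main
variable {V : Type*} (G' : SimpleGraph V) (p q w : V)

lemma adj_inl_inl_s15 (x y : {x : V // G'.Reachable p x}) :
    (sideGraphPlusVertex G' p p q w).Adj (.inl x) (.inl y) ↔ G'.Adj x.1 y.1 := by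
  simp only [sideGraphPlusVertex, fromRel_adj]
  simp
  exact ⟨fun h => h.2.elim id Adj.symm,
    fun h => ⟨fun e => h.ne (congrArg Subtype.val e), Or.inl h⟩⟩

lemma adj_inl_inr (x : {x : V // G'.Reachable p x}) :
    (sideGraphPlusVertex G' p p q w).Adj (.inl x) (.inr ()) ↔
      (x.1 = p ∨ x.1 = q ∨ x.1 = w) := by
  simp [sideGraphPlusVertex]

lemma side_connected_cubic
    (hpq : p ≠ q) (hpw : p ≠ w) (hqw : q ≠ w)
    (hq : G'.Reachable p q) (hw : G'.Reachable p w)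
    (hdeg2 : ∀ x : V, (x = p ∨ x = q ∨ x = w) → (G'.neighborSet x).ncard = 2)
    (hdeg3 : ∀ x : V, G'.Reachable p x → ¬(x = p ∨ x = q ∨ x = w) →
      (G'.neighborSet x).ncard = 3) :
    (sideGraphPlusVertex G' p p q w).Connected ∧
      IsCubic (sideGraphPlusVertex G' p p q w) := by
  classical
  set H := sideGraphPlusVertex G' p p q w with hH
  -- every inl vertex is reachable from the root
  have key : ∀ (a b : V) (wk : G'.Walk a b) (ha : G'.Reachable p a) (hb : G'.Reachable p b),
      H.Reachable (.inl ⟨a, ha⟩) (.inl ⟨b, hb⟩) := by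
    intro a b wk
    induction wk with
    | nil => intro ha hb; rfl
    | @cons a c b hadj wk ih =>
      intro ha hb
      have hc : G'.Reachable p c := ha.trans hadj.reachable
      exact (Adj.reachable ((adj_inl_inl_s15 G' p q w ⟨a, ha⟩ ⟨c, hc⟩).2 hadj)).trans (ih hc hb)
  have reach_root : ∀ u : ({x : V // G'.Reachable p x} ⊕ Unit),
      H.Reachable (.inl ⟨p, Reachable.refl p⟩) u := by
    rintro (⟨x, hx⟩ | ⟨⟩)
    · exact hx.elim fun wk => key p x wk (Reachable.refl p) hx
    · exact Adj.reachable ((adj_inl_inr G' p q w ⟨p, Reachable.refl p⟩).2 (Or.inl rfl))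
  have hconn : H.Connected := by
    rw [connected_iff]
    refine ⟨fun u v => (reach_root u).symm.trans (reach_root v), ⟨.inr ()⟩⟩
  refine ⟨hconn, ?_⟩
  -- cubic
  rintro (x | ⟨⟩)
  · -- neighbours of inl x
    have hNval : (G'.neighborSet x.1) ⊆ Set.range (Subtype.val : {x : V // G'.Reachable p x} → V) := by
      intro y hy
      exact ⟨⟨y, x.2.trans (Adj.reachable hy)⟩, rfl⟩
    have hNcard : (G'.neighborSet x.1).ncard = if x.1 = p ∨ x.1 = q ∨ x.1 = w then 2 else 3 := by
      split
      · exact hdeg2 x.1 (by assumption)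
      · exact hdeg3 x.1 x.2 (by assumption)
    have hNfin : (G'.neighborSet x.1).Finite := by
      apply Set.finite_of_ncard_ne_zero
      rw [hNcard]; split <;> simp
    set A : Set ({x : V // G'.Reachable p x} ⊕ Unit) :=
      Sum.inl '' (Subtype.val ⁻¹' (G'.neighborSet x.1)) with hAdef
    have hpre := Set.ncard_image_of_injective
      ((Subtype.val : {x : V // G'.Reachable p x} → V) ⁻¹' (G'.neighborSet x.1))
      (Subtype.val_injective (p := fun x => G'.Reachable p x))
    rw [Set.image_preimage_eq_of_subset hNval] at hpre
    have hAcard : A.ncard = (G'.neighborSet x.1).ncard := by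
      rw [hAdef, Set.ncard_image_of_injective _ Sum.inl_injective, ← hpre]
    have hAfin : A.Finite :=
      ((hNfin.preimage (Subtype.val_injective.injOn)).image _)
    have hns : H.neighborSet (.inl x) =
        A ∪ (if x.1 = p ∨ x.1 = q ∨ x.1 = w then {Sum.inr ()} else ∅) := by
      ext u
      rcases u with y | ⟨⟩
      · simp only [mem_neighborSet, hAdef, Set.mem_union, Set.mem_image]
        rw [adj_inl_inl_s15 G' p q w x y]
        constructor
        · intro h; exact Or.inl ⟨y, h, rfl⟩
        · rintro (⟨z, hz, hzy⟩ | h)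
          · cases Sum.inl_injective hzy; exact hz
          · exfalso; split at h <;> simp at h
      · simp only [mem_neighborSet, hAdef, Set.mem_union, Set.mem_image]
        rw [adj_inl_inr G' p q w x]
        constructor
        · intro h
          right; split
          · simp
          · tauto
        · rintro (⟨z, hz, hzy⟩ | h)
          · simp at hzy
          · split at h
            · assumption
            · simp at h
    rw [hns]
    by_cases hx3 : x.1 = p ∨ x.1 = q ∨ x.1 = w
    · rw [if_pos hx3, Set.ncard_union_eq (by simp [hAdef]) hAfin (Set.finite_singleton _),
        hAcard, hNcard, if_pos hx3, Set.ncard_singleton]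
    · rw [if_neg hx3, Set.union_empty, hAcard, hNcard, if_neg hx3]
  · -- neighbours of inr
    have hns : H.neighborSet (.inr ()) =
        {Sum.inl ⟨p, Reachable.refl p⟩, Sum.inl ⟨q, hq⟩, Sum.inl ⟨w, hw⟩} := by
      ext u
      rcases u with y | ⟨⟩
      · simp only [mem_neighborSet, Set.mem_insert_iff, Set.mem_singleton_iff]
        rw [adj_comm, adj_inl_inr G' p q w y]
        constructor
        · rintro (h | h | h) <;>
            [exact Or.inl (by apply congrArg; exact Subtype.ext h);
             exact Or.inr (Or.inl (by apply congrArg; exact Subtype.ext h));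
             exact Or.inr (Or.inr (by apply congrArg; exact Subtype.ext h))]
        · rintro (h | h | h) <;> cases Sum.inl_injective h <;> simp
      · simp only [mem_neighborSet]
        constructor
        · intro h; exact absurd h (H.irrefl)
        · intro h; simp at h
    rw [hns]
    rw [Set.ncard_eq_three]
    refine ⟨_, _, _, ?_, ?_, ?_, rfl⟩ <;>
      simp [Subtype.ext_iff, hpq, hpw, hqw]
end Main


/-- the inverse of a type 3 breeding operation. If
{(v₁,v₂),(v₃,v₄),(v₅,v₆)} is a 3-cracker of a connected cubic graph, with v₁,v₃,v₅ on
one side and v₂,v₄,v₆ on the other, then each side together with a new vertex joined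
to its three cracker endpoints is a connected cubic graph. -/
theorem inverse_breed3_spec {V : Type*} (G : SimpleGraph V)
    (hG : G.Connected) (hcub : IsCubic G) (v₁ v₂ v₃ v₄ v₅ v₆ : V)
    (hcr : IsKCracker G {s(v₁, v₂), s(v₃, v₄), s(v₅, v₆)} 3)
    (h13 : (G.deleteEdges {s(v₁, v₂), s(v₃, v₄), s(v₅, v₆)}).Reachable v₁ v₃)
    (h15 : (G.deleteEdges {s(v₁, v₂), s(v₃, v₄), s(v₅, v₆)}).Reachable v₁ v₅)
    (h24 : (G.deleteEdges {s(v₁, v₂), s(v₃, v₄), s(v₅, v₆)}).Reachable v₂ v₄)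
    (h26 : (G.deleteEdges {s(v₁, v₂), s(v₃, v₄), s(v₅, v₆)}).Reachable v₂ v₆)
    (h12 : ¬ (G.deleteEdges {s(v₁, v₂), s(v₃, v₄), s(v₅, v₆)}).Reachable v₁ v₂) :
    (sideGraphPlusVertex (G.deleteEdges {s(v₁, v₂), s(v₃, v₄), s(v₅, v₆)}) v₁ v₁ v₃ v₅).Connected ∧
      IsCubic (sideGraphPlusVertex (G.deleteEdges {s(v₁, v₂), s(v₃, v₄), s(v₅, v₆)}) v₁ v₁ v₃ v₅) ∧
      (sideGraphPlusVertex (G.deleteEdges {s(v₁, v₂), s(v₃, v₄), s(v₅, v₆)}) v₂ v₂ v₄ v₆).Connected ∧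
      IsCubic (sideGraphPlusVertex (G.deleteEdges {s(v₁, v₂), s(v₃, v₄), s(v₅, v₆)}) v₂ v₂ v₄ v₆) := by
  set C : Set (Sym2 V) := {s(v₁, v₂), s(v₃, v₄), s(v₅, v₆)} with hCdef
  set G' : SimpleGraph V := G.deleteEdges C with hG'def
  have hsub := hcr.1.2.1
  have hpair := hcr.1.2.2.1
  have hadj12 : G.Adj v₁ v₂ := (mem_edgeSet G).1 (hsub (by simp [hCdef]))
  have hadj34 : G.Adj v₃ v₄ := (mem_edgeSet G).1 (hsub (by simp [hCdef]))
  have hadj56 : G.Adj v₅ v₆ := (mem_edgeSet G).1 (hsub (by simp [hCdef]))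
  have hne12 := hadj12.ne
  have hne34 := hadj34.ne
  have hne56 := hadj56.ne
  obtain ⟨hE1, hE2, hE3⟩ := three_distinct hcr.2
  have d12_34 := hpair (show s(v₁,v₂) ∈ C by simp [hCdef]) (show s(v₃,v₄) ∈ C by simp [hCdef]) hE1
  have d12_56 := hpair (show s(v₁,v₂) ∈ C by simp [hCdef]) (show s(v₅,v₆) ∈ C by simp [hCdef]) hE2
  have d34_56 := hpair (show s(v₃,v₄) ∈ C by simp [hCdef]) (show s(v₅,v₆) ∈ C by simp [hCdef]) hE3
  have hne13 : v₁ ≠ v₃ := fun h => d12_34 v₁ ⟨by simp, by simp [h]⟩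
  have hne14 : v₁ ≠ v₄ := fun h => d12_34 v₁ ⟨by simp, by simp [h]⟩
  have hne15 : v₁ ≠ v₅ := fun h => d12_56 v₁ ⟨by simp, by simp [h]⟩
  have hne16 : v₁ ≠ v₆ := fun h => d12_56 v₁ ⟨by simp, by simp [h]⟩
  have hne23 : v₂ ≠ v₃ := fun h => d12_34 v₂ ⟨by simp, by simp [h]⟩
  have hne24 : v₂ ≠ v₄ := fun h => d12_34 v₂ ⟨by simp, by simp [h]⟩
  have hne25 : v₂ ≠ v₅ := fun h => d12_56 v₂ ⟨by simp, by simp [h]⟩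
  have hne26 : v₂ ≠ v₆ := fun h => d12_56 v₂ ⟨by simp, by simp [h]⟩
  have hne35 : v₃ ≠ v₅ := fun h => d34_56 v₃ ⟨by simp, by simp [h]⟩
  have hne36 : v₃ ≠ v₆ := fun h => d34_56 v₃ ⟨by simp, by simp [h]⟩
  have hne45 : v₄ ≠ v₅ := fun h => d34_56 v₄ ⟨by simp, by simp [h]⟩
  have hne46 : v₄ ≠ v₆ := fun h => d34_56 v₄ ⟨by simp, by simp [h]⟩
  have hGfin : ∀ v : V, (G.neighborSet v).Finite := fun v =>
    Set.finite_of_ncard_ne_zero (by rw [hcub v]; norm_num)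
  -- membership characterizations
  have hiff1 : ∀ y, s(v₁,y) ∈ C ↔ y = v₂ := by
    intro y
    constructor
    · intro h
      simp only [hCdef, Set.mem_insert_iff, Set.mem_singleton_iff, Sym2.eq_iff] at h
      tauto
    · rintro rfl; simp [hCdef]
  have hiff3 : ∀ y, s(v₃,y) ∈ C ↔ y = v₄ := by
    intro y
    constructor
    · intro h
      simp only [hCdef, Set.mem_insert_iff, Set.mem_singleton_iff, Sym2.eq_iff] at h
      have := hne13.symm; have := hne23.symm; have := hne35; have := hne36
      tauto
    · rintro rfl; simp [hCdef]
  have hiff5 : ∀ y, s(v₅,y) ∈ C ↔ y = v₆ := by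
    intro y
    constructor
    · intro h
      simp only [hCdef, Set.mem_insert_iff, Set.mem_singleton_iff, Sym2.eq_iff] at h
      have := hne15.symm; have := hne25.symm; have := hne35.symm; have := hne45.symm
      tauto
    · rintro rfl; simp [hCdef]
  have hiff2 : ∀ y, s(v₂,y) ∈ C ↔ y = v₁ := by
    intro y
    constructor
    · intro h
      simp only [hCdef, Set.mem_insert_iff, Set.mem_singleton_iff, Sym2.eq_iff] at h
      have := hne12.symm
      tauto
    · rintro rfl; simp [hCdef, Sym2.eq_swap]
  have hiff4 : ∀ y, s(v₄,y) ∈ C ↔ y = v₃ := by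
    intro y
    constructor
    · intro h
      simp only [hCdef, Set.mem_insert_iff, Set.mem_singleton_iff, Sym2.eq_iff] at h
      have := hne14.symm; have := hne24.symm; have := hne34.symm; have := hne45; have := hne46
      tauto
    · rintro rfl; simp [hCdef, Sym2.eq_swap]
  have hiff6 : ∀ y, s(v₆,y) ∈ C ↔ y = v₅ := by
    intro y
    constructor
    · intro h
      simp only [hCdef, Set.mem_insert_iff, Set.mem_singleton_iff, Sym2.eq_iff] at h
      have := hne16.symm; have := hne26.symm; have := hne36.symm; have := hne46.symm
      have := hne56.symm
      tauto
    · rintro rfl; simp [hCdef, Sym2.eq_swap]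
  have hnbr_eq : ∀ x : V, x ≠ v₁ → x ≠ v₂ → x ≠ v₃ → x ≠ v₄ → x ≠ v₅ → x ≠ v₆ →
      G'.neighborSet x = G.neighborSet x := by
    intro x h1 h2 h3 h4 h5 h6
    apply nbr_delete_eq
    intro y h
    simp only [hCdef, Set.mem_insert_iff, Set.mem_singleton_iff, Sym2.eq_iff] at h
    tauto
  have hdeg2gen : ∀ a b : V, G.Adj a b → (∀ y, s(a,y) ∈ C ↔ y = b) →
      (G'.neighborSet a).ncard = 2 := by
    intro a b hab hiff
    rw [hG'def, nbr_delete_eq_diff G C a b hiff,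
      Set.ncard_diff_singleton_of_mem (show b ∈ G.neighborSet a from hab), hcub a]
  constructor
  · exact (side_connected_cubic G' v₁ v₃ v₅ hne13 hne15 hne35 h13 h15
      (by rintro x (rfl | rfl | rfl)
          exacts [hdeg2gen x v₂ hadj12 hiff1, hdeg2gen x v₄ hadj34 hiff3,
            hdeg2gen x v₆ hadj56 hiff5])
      (by intro x hx hnx
          push_neg at hnx
          obtain ⟨h1, h3, h5⟩ := hnx
          have h2 : x ≠ v₂ := fun h => h12 (h ▸ hx)
          have h4 : x ≠ v₄ := fun h => h12 ((h ▸ hx).trans h24.symm)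
          have h6 : x ≠ v₆ := fun h => h12 ((h ▸ hx).trans h26.symm)
          rw [hnbr_eq x h1 h2 h3 h4 h5 h6]; exact hcub x)).1
  refine ⟨?_, ?_, ?_⟩
  · exact (side_connected_cubic G' v₁ v₃ v₅ hne13 hne15 hne35 h13 h15
      (by rintro x (rfl | rfl | rfl)
          exacts [hdeg2gen x v₂ hadj12 hiff1, hdeg2gen x v₄ hadj34 hiff3,
            hdeg2gen x v₆ hadj56 hiff5])
      (by intro x hx hnx
          push_neg at hnx
          obtain ⟨h1, h3, h5⟩ := hnx
          have h2 : x ≠ v₂ := fun h => h12 (h ▸ hx)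
          have h4 : x ≠ v₄ := fun h => h12 ((h ▸ hx).trans h24.symm)
          have h6 : x ≠ v₆ := fun h => h12 ((h ▸ hx).trans h26.symm)
          rw [hnbr_eq x h1 h2 h3 h4 h5 h6]; exact hcub x)).2
  · exact (side_connected_cubic G' v₂ v₄ v₆ hne24 hne26 hne46 h24 h26
      (by rintro x (rfl | rfl | rfl)
          exacts [hdeg2gen x v₁ hadj12.symm hiff2, hdeg2gen x v₃ hadj34.symm hiff4,
            hdeg2gen x v₅ hadj56.symm hiff6])
      (by intro x hx hnx
          push_neg at hnx
          obtain ⟨h2, h4, h6⟩ := hnx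
          have h1 : x ≠ v₁ := fun h => h12 ((h ▸ hx).symm)
          have h3 : x ≠ v₃ := fun h => h12 (h13.trans (h ▸ hx).symm)
          have h5 : x ≠ v₅ := fun h => h12 (h15.trans (h ▸ hx).symm)
          rw [hnbr_eq x h1 h2 h3 h4 h5 h6]; exact hcub x)).1
  · exact (side_connected_cubic G' v₂ v₄ v₆ hne24 hne26 hne46 h24 h26
      (by rintro x (rfl | rfl | rfl)
          exacts [hdeg2gen x v₁ hadj12.symm hiff2, hdeg2gen x v₃ hadj34.symm hiff4,
            hdeg2gen x v₅ hadj56.symm hiff6])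
      (by intro x hx hnx
          push_neg at hnx
          obtain ⟨h2, h4, h6⟩ := hnx
          have h1 : x ≠ v₁ := fun h => h12 ((h ▸ hx).symm)
          have h3 : x ≠ v₃ := fun h => h12 (h13.trans (h ▸ hx).symm)
          have h5 : x ≠ v₅ := fun h => h12 (h15.trans (h ▸ hx).symm)
          rw [hnbr_eq x h1 h2 h3 h4 h5 h6]; exact hcub x)).2
end

section
/- Let ΓD be a connected cubic graph with a bridge (a,b), and let c and d be the other two neighbours of a. Suppose (c,d) is an edge of ΓD, let e be the third neighbour of c (besides a and d) and let f be the third neighbour of d (besides a and c), and suppose e ≠ f. Then the graph obtained from ΓD by deleting the vertices c and d (together with their incident edges) and adding the edges (a,e) and (a,f) is a connected cubic graph with two fewer vertices than ΓD, in which the edge (a,b) is still a bridge. -/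
open SimpleGraph

/-- Delete the vertices c and d (with their incident edges) and add the edges (a,e)
and (a,f). -/
def removeTriangle {V : Type*} (G : SimpleGraph V) (c d a e f : V) :
    SimpleGraph {x : V // x ≠ c ∧ x ≠ d} :=
  SimpleGraph.fromRel (fun p q =>
    G.Adj p.1 q.1 ∨ (p.1 = a ∧ q.1 = e) ∨ (p.1 = a ∧ q.1 = f))

/-- the inverse of a type 3 parthenogenic operation (removal of a
parthenogenic triangle). Deleting the triangle vertices c, d and rejoining a to e and
f yields a connected cubic graph with two fewer vertices, in which (a,b) is still a
bridge. -/
theorem inverse_parth3_spec {V : Type*} [Fintype V] (G : SimpleGraph V)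
    (hG : G.Connected) (hcub : IsCubic G) (a b c d e f : V)
    (hbr : G.IsBridge s(a, b))
    (hac : G.Adj a c) (had : G.Adj a d) (hcd' : c ≠ d) (hcb : c ≠ b) (hdb : d ≠ b)
    (hcd : G.Adj c d)
    (hce : G.Adj c e) (hea : e ≠ a) (hed : e ≠ d)
    (hdf : G.Adj d f) (hfa : f ≠ a) (hfc : f ≠ c)
    (hef : e ≠ f) :
    (removeTriangle G c d a e f).Connected ∧
      IsCubic (removeTriangle G c d a e f) ∧
      Nat.card {x : V // x ≠ c ∧ x ≠ d} + 2 = Nat.card V ∧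
      (removeTriangle G c d a e f).IsBridge
        s(⟨a, hac.ne, had.ne⟩, ⟨b, hcb.symm, hdb.symm⟩) := by
  have hbrr := (isBridge_iff).mp hbr
  have hab : G.Adj a b := by
    by_contra hn
    apply hbrr
    have hEq : G.deleteEdges {s(a, b)} = G := by
      rw [deleteEdges_eq_self, Set.disjoint_singleton_right]
      exact hn
    rw [hEq]
    exact hG.preconnected a b
  set G' := removeTriangle G c d a e f with hG'
  set a' : {x : V // x ≠ c ∧ x ≠ d} := ⟨a, hac.ne, had.ne⟩ with ha'
  set b' : {x : V // x ≠ c ∧ x ≠ d} := ⟨b, hcb.symm, hdb.symm⟩ with hb'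
  -- neighbor set computations
  have hNa : G.neighborSet a = {b, c, d} := by
    refine (Set.eq_of_subset_of_ncard_le ?_ ?_ (Set.toFinite _)).symm
    · intro x hx
      rcases hx with rfl | rfl | rfl
      · exact hab
      · exact hac
      · exact had
    · rw [hcub a]
      refine le_of_eq (Set.ncard_eq_three.mpr ⟨b, c, d, hcb.symm, hdb.symm, hcd', rfl⟩).symm
  have hNc : G.neighborSet c = {a, d, e} := by
    refine (Set.eq_of_subset_of_ncard_le ?_ ?_ (Set.toFinite _)).symm
    · intro x hx
      rcases hx with rfl | rfl | rfl
      · exact hac.symm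
      · exact hcd
      · exact hce
    · rw [hcub c]
      refine le_of_eq (Set.ncard_eq_three.mpr ⟨a, d, e, had.ne, hea.symm, hed.symm, rfl⟩).symm
  have hNd : G.neighborSet d = {a, c, f} := by
    refine (Set.eq_of_subset_of_ncard_le ?_ ?_ (Set.toFinite _)).symm
    · intro x hx
      rcases hx with rfl | rfl | rfl
      · exact had.symm
      · exact hcd.symm
      · exact hdf
    · rw [hcub d]
      refine le_of_eq (Set.ncard_eq_three.mpr ⟨a, c, f, hac.ne, hfa.symm, hfc.symm, rfl⟩).symm
  -- helper for adjacency in deleted graph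
  have hDadj : ∀ x y : V, G.Adj x y → s(x, y) ≠ s(a, b) → (G \ fromEdgeSet {s(a, b)}).Adj x y := by
    intro x y hxy hne
    rw [sdiff_adj]
    refine ⟨hxy, ?_⟩
    rw [fromEdgeSet_adj]
    rintro ⟨hm, -⟩
    exact hne (Set.mem_singleton_iff.mp hm)
  have hne1 : ∀ x y : V, x ≠ b → y ≠ b → s(x, y) ≠ s(a, b) := by
    intro x y hx hy hs
    rw [Sym2.eq_iff] at hs
    rcases hs with ⟨-, h⟩ | ⟨h, -⟩
    exacts [hy h, hx h]
  have hne2 : ∀ x y : V, x ≠ a → x ≠ b → s(x, y) ≠ s(a, b) := by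
    intro x y hx hy hs
    rw [Sym2.eq_iff] at hs
    rcases hs with ⟨h, -⟩ | ⟨h, -⟩
    exacts [hx h, hy h]
  have heb : e ≠ b := by
    intro h
    apply hbrr
    have h1 : (G \ fromEdgeSet {s(a, b)}).Adj a c :=
      hDadj a c hac (hne1 a c hab.ne hcb)
    have h2 : (G \ fromEdgeSet {s(a, b)}).Adj c b :=
      hDadj c b (h ▸ hce) (hne2 c b hac.ne' hcb)
    exact h1.reachable.trans h2.reachable
  have hfb : f ≠ b := by
    intro h
    apply hbrr
    have h1 : (G \ fromEdgeSet {s(a, b)}).Adj a d :=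
      hDadj a d had (hne1 a d hab.ne hdb)
    have h2 : (G \ fromEdgeSet {s(a, b)}).Adj d b :=
      hDadj d b (h ▸ hdf) (hne2 d b had.ne' hdb)
    exact h1.reachable.trans h2.reachable
  have hfd : f ≠ d := hdf.ne'
  have hec : e ≠ c := hce.ne'
  -- adjacency characterization
  have hAdj' : ∀ p q : {x : V // x ≠ c ∧ x ≠ d}, G'.Adj p q ↔ p.1 ≠ q.1 ∧
      (G.Adj p.1 q.1 ∨ (p.1 = a ∧ q.1 = e) ∨ (p.1 = a ∧ q.1 = f) ∨
        (q.1 = a ∧ p.1 = e) ∨ (q.1 = a ∧ p.1 = f)) := by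
    intro p q
    rw [hG', removeTriangle, fromRel_adj]
    constructor
    · rintro ⟨hne, h | h⟩
      · exact ⟨fun h' => hne (Subtype.ext h'), by tauto⟩
      · refine ⟨fun h' => hne (Subtype.ext h'), ?_⟩
        rcases h with h | h | h
        · exact Or.inl h.symm
        · exact Or.inr (Or.inr (Or.inr (Or.inl h)))
        · exact Or.inr (Or.inr (Or.inr (Or.inr h)))
    · rintro ⟨hne, h⟩
      refine ⟨fun h' => hne (congrArg Subtype.val h'), ?_⟩
      rcases h with h | h | h | h | h
      · exact Or.inl (Or.inl h)
      · exact Or.inl (Or.inr (Or.inl h))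
      · exact Or.inl (Or.inr (Or.inr h))
      · exact Or.inr (Or.inr (Or.inl h))
      · exact Or.inr (Or.inr (Or.inr h))
  -- non-adjacency facts
  have hdNe : d ∉ G.neighborSet e := by
    intro h
    have h2 : e ∈ G.neighborSet d := ((G.mem_neighborSet _ _).mp h).symm
    rw [hNd] at h2
    rcases h2 with h2 | h2 | h2
    exacts [hea h2, hec h2, hef h2]
  have haNe : a ∉ G.neighborSet e := by
    intro h
    have h2 : e ∈ G.neighborSet a := ((G.mem_neighborSet _ _).mp h).symm
    rw [hNa] at h2
    rcases h2 with h2 | h2 | h2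
    exacts [heb h2, hec h2, hed h2]
  have hcNf : c ∉ G.neighborSet f := by
    intro h
    have h2 : f ∈ G.neighborSet c := ((G.mem_neighborSet _ _).mp h).symm
    rw [hNc] at h2
    rcases h2 with h2 | h2 | h2
    exacts [hfa h2, hfd h2, hef h2.symm]
  have haNf : a ∉ G.neighborSet f := by
    intro h
    have h2 : f ∈ G.neighborSet a := ((G.mem_neighborSet _ _).mp h).symm
    rw [hNa] at h2
    rcases h2 with h2 | h2 | h2
    exacts [hfb h2, hfc h2, hfd h2]
  -- membership in image of neighbor sets
  have hmem : ∀ (v' : {x : V // x ≠ c ∧ x ≠ d}) (x : V),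
      x ∈ Subtype.val '' (G'.neighborSet v') ↔ x ≠ c ∧ x ≠ d ∧ v'.1 ≠ x ∧
        (G.Adj v'.1 x ∨ (v'.1 = a ∧ x = e) ∨ (v'.1 = a ∧ x = f) ∨
          (x = a ∧ v'.1 = e) ∨ (x = a ∧ v'.1 = f)) := by
    intro v' x
    constructor
    · rintro ⟨q, hq, rfl⟩
      obtain ⟨h1, h2⟩ := (hAdj' v' q).mp hq
      exact ⟨q.2.1, q.2.2, h1, h2⟩
    · rintro ⟨h1, h2, h3, h4⟩
      exact ⟨⟨x, h1, h2⟩, (hAdj' v' ⟨x, h1, h2⟩).mpr ⟨h3, h4⟩, rfl⟩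
  have himgA : Subtype.val '' (G'.neighborSet a') = {b, e, f} := by
    ext x
    rw [hmem a' x]
    constructor
    · rintro ⟨h1, h2, h3, h4⟩
      rcases h4 with h | ⟨-, rfl⟩ | ⟨-, rfl⟩ | ⟨rfl, h⟩ | ⟨rfl, h⟩
      · have hx : x ∈ G.neighborSet a := h
        rw [hNa] at hx
        rcases hx with rfl | rfl | rfl
        · exact Or.inl rfl
        · exact absurd rfl h1
        · exact absurd rfl h2
      · exact Or.inr (Or.inl rfl)
      · exact Or.inr (Or.inr rfl)
      · exact absurd h hea.symm
      · exact absurd h hfa.symm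
    · rintro (rfl | rfl | rfl)
      · exact ⟨hcb.symm, hdb.symm, hab.ne, Or.inl hab⟩
      · exact ⟨hec, hed, fun h => hea h.symm, Or.inr (Or.inl ⟨rfl, rfl⟩)⟩
      · exact ⟨hfc, hfd, fun h => hfa h.symm, Or.inr (Or.inr (Or.inl ⟨rfl, rfl⟩))⟩
  have himgE : Subtype.val '' (G'.neighborSet ⟨e, hec, hed⟩) = insert a (G.neighborSet e \ {c}) := by
    ext x
    rw [hmem ⟨e, hec, hed⟩ x]
    constructor
    · rintro ⟨h1, h2, h3, h4⟩
      rcases h4 with h | ⟨h, -⟩ | ⟨h, -⟩ | ⟨rfl, -⟩ | ⟨-, h⟩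
      · exact Or.inr ⟨h, h1⟩
      · exact absurd h hea
      · exact absurd h hea
      · exact Or.inl rfl
      · exact absurd h hef
    · rintro (rfl | ⟨hx, hxc⟩)
      · exact ⟨hac.ne, had.ne, hea, Or.inr (Or.inr (Or.inr (Or.inl ⟨rfl, rfl⟩)))⟩
      · exact ⟨hxc, fun hxd => hdNe (hxd ▸ hx), ((G.mem_neighborSet _ _).mp hx).ne, Or.inl hx⟩
  have himgF : Subtype.val '' (G'.neighborSet ⟨f, hfc, hfd⟩) = insert a (G.neighborSet f \ {d}) := by
    ext x
    rw [hmem ⟨f, hfc, hfd⟩ x]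
    constructor
    · rintro ⟨h1, h2, h3, h4⟩
      rcases h4 with h | ⟨h, -⟩ | ⟨h, -⟩ | ⟨rfl, h⟩ | ⟨rfl, -⟩
      · exact Or.inr ⟨h, h2⟩
      · exact absurd h hfa
      · exact absurd h hfa
      · exact absurd h hef.symm
      · exact Or.inl rfl
    · rintro (rfl | ⟨hx, hxd⟩)
      · exact ⟨hac.ne, had.ne, hfa, Or.inr (Or.inr (Or.inr (Or.inr ⟨rfl, rfl⟩)))⟩
      · exact ⟨fun hxc => hcNf (hxc ▸ hx), hxd, ((G.mem_neighborSet _ _).mp hx).ne, Or.inl hx⟩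
  have himgO : ∀ v' : {x : V // x ≠ c ∧ x ≠ d}, v'.1 ≠ a → v'.1 ≠ e → v'.1 ≠ f →
      Subtype.val '' (G'.neighborSet v') = G.neighborSet v'.1 := by
    intro v' hva hve hvf
    ext x
    rw [hmem v' x]
    constructor
    · rintro ⟨-, -, -, h4⟩
      rcases h4 with h | ⟨h, -⟩ | ⟨h, -⟩ | ⟨-, h⟩ | ⟨-, h⟩
      · exact h
      · exact absurd h hva
      · exact absurd h hva
      · exact absurd h hve
      · exact absurd h hvf
    · intro hx
      refine ⟨?_, ?_, ((G.mem_neighborSet _ _).mp hx).ne, Or.inl hx⟩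
      · intro hxc
        have h2 : v'.1 ∈ G.neighborSet c := by
          have h0 : G.Adj x v'.1 := ((G.mem_neighborSet _ _).mp hx).symm
          rw [hxc] at h0; exact h0
        rw [hNc] at h2
        rcases h2 with h2 | h2 | h2
        exacts [hva h2, v'.2.2 h2, hve h2]
      · intro hxd
        have h2 : v'.1 ∈ G.neighborSet d := by
          have h0 : G.Adj x v'.1 := ((G.mem_neighborSet _ _).mp hx).symm
          rw [hxd] at h0; exact h0
        rw [hNd] at h2
        rcases h2 with h2 | h2 | h2
        exacts [hva h2, v'.2.1 h2, hvf h2]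
  -- cubic
  have hcub' : IsCubic G' := by
    intro v'
    rw [← Set.ncard_image_of_injective _ Subtype.val_injective]
    by_cases hva : v'.1 = a
    · rw [show v' = a' from Subtype.ext hva, himgA]
      rw [Set.ncard_insert_of_notMem (by rintro (rfl | rfl); exacts [heb rfl, hfb rfl]),
        Set.ncard_pair hef]
    · by_cases hve : v'.1 = e
      · rw [show v' = (⟨e, hec, hed⟩ : {x : V // x ≠ c ∧ x ≠ d}) from Subtype.ext hve, himgE]
        rw [Set.ncard_insert_of_notMem (fun h => haNe h.1),
          Set.ncard_diff_singleton_of_mem (s := G.neighborSet e) (a := c) hce.symm, hcub e]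
      · by_cases hvf : v'.1 = f
        · rw [show v' = (⟨f, hfc, hfd⟩ : {x : V // x ≠ c ∧ x ≠ d}) from Subtype.ext hvf, himgF]
          rw [Set.ncard_insert_of_notMem (fun h => haNf h.1),
            Set.ncard_diff_singleton_of_mem (s := G.neighborSet f) (a := d) hdf.symm, hcub f]
        · rw [himgO v' hva hve hvf, hcub v'.1]
  -- connectivity
  have key : ∀ (x y : V) (w : G.Walk x y), y = a → ∀ (h1 : x ≠ c) (h2 : x ≠ d),
      G'.Reachable ⟨x, h1, h2⟩ a' := by
    intro x y w
    induction w with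
    | nil => rintro rfl h1 h2; exact Reachable.refl _
    | @cons u z y h p ih =>
      intro hy h1 h2
      by_cases hzc : z = c
      · have hu : u ∈ G.neighborSet c := by
          have h0 : G.Adj u z := h
          rw [hzc] at h0
          exact h0.symm
        rcases (hNc ▸ hu : u ∈ ({a, d, e} : Set V)) with rfl | rfl | hue
        · exact Reachable.refl _
        · exact absurd rfl h2
        · exact ((hAdj' ⟨u, h1, h2⟩ a').mpr
            ⟨fun hua => hea (hua.symm.trans hue).symm,
              Or.inr (Or.inr (Or.inr (Or.inl ⟨rfl, hue⟩)))⟩).reachable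
      · by_cases hzd : z = d
        · have hu : u ∈ G.neighborSet d := by
            have h0 : G.Adj u z := h
            rw [hzd] at h0
            exact h0.symm
          rcases (hNd ▸ hu : u ∈ ({a, c, f} : Set V)) with rfl | rfl | huf
          · exact Reachable.refl _
          · exact absurd rfl h1
          · exact ((hAdj' ⟨u, h1, h2⟩ a').mpr
              ⟨fun hua => hfa (hua.symm.trans huf).symm,
                Or.inr (Or.inr (Or.inr (Or.inr ⟨rfl, huf⟩)))⟩).reachable
        · exact (((hAdj' ⟨u, h1, h2⟩ ⟨z, hzc, hzd⟩).mpr ⟨h.ne, Or.inl h⟩).reachable).trans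
            (ih hy hzc hzd)
  have hreach : ∀ x' : {x : V // x ≠ c ∧ x ≠ d}, G'.Reachable x' a' := by
    intro x'
    exact (hG.preconnected x'.1 a).elim fun w => key x'.1 a w rfl x'.2.1 x'.2.2
  have hconn : G'.Connected := by
    rw [connected_iff]
    exact ⟨fun x' y' => (hreach x').trans (hreach y').symm, ⟨a'⟩⟩
  -- bridge
  have key2 : ∀ (p q : {x : V // x ≠ c ∧ x ≠ d}) (w : (G' \ fromEdgeSet {s(a', b')}).Walk p q),
      (G \ fromEdgeSet {s(a, b)}).Reachable p.1 q.1 := by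
    intro p q w
    induction w with
    | nil => exact Reachable.refl _
    | @cons p z q h w ih =>
      refine Reachable.trans ?_ ih
      rw [sdiff_adj] at h
      obtain ⟨hadj, hnadj⟩ := h
      have hES : s(p, z) ≠ s(a', b') := by
        intro hE
        exact hnadj ((fromEdgeSet_adj _).mpr ⟨Set.mem_singleton_iff.mpr hE, hadj.ne⟩)
      obtain ⟨-, hcase⟩ := (hAdj' p z).mp hadj
      rcases hcase with h | ⟨h1, h2⟩ | ⟨h1, h2⟩ | ⟨h1, h2⟩ | ⟨h1, h2⟩
      · refine (hDadj p.1 z.1 h ?_).reachable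
        intro hs
        rw [Sym2.eq_iff] at hs
        apply hES
        rcases hs with ⟨hpa, hzb⟩ | ⟨hpb, hza⟩
        · rw [show p = a' from Subtype.ext hpa, show z = b' from Subtype.ext hzb]
        · rw [show p = b' from Subtype.ext hpb, show z = a' from Subtype.ext hza, Sym2.eq_swap]
      · rw [h1, h2]
        exact ((hDadj a c hac (hne1 a c hab.ne hcb)).reachable).trans
          ((hDadj c e hce (hne2 c e hac.ne' hcb)).reachable)
      · rw [h1, h2]
        exact ((hDadj a d had (hne1 a d hab.ne hdb)).reachable).trans
          ((hDadj d f hdf (hne2 d f had.ne' hdb)).reachable)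
      · rw [h1, h2]
        exact (((hDadj a c hac (hne1 a c hab.ne hcb)).reachable).trans
          ((hDadj c e hce (hne2 c e hac.ne' hcb)).reachable)).symm
      · rw [h1, h2]
        exact (((hDadj a d had (hne1 a d hab.ne hdb)).reachable).trans
          ((hDadj d f hdf (hne2 d f had.ne' hdb)).reachable)).symm
  have hbridge : G'.IsBridge s(a', b') := by
    rw [isBridge_iff]
    rintro ⟨w⟩
    exact hbrr (key2 a' b' w)
  -- cardinality
  have hcardV : Nat.card {x : V // x ≠ c ∧ x ≠ d} + 2 = Nat.card V := by
    have h1 : ({c, d} : Set V).ncard + ({c, d}ᶜ : Set V).ncard = Nat.card V :=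
      Set.ncard_add_ncard_compl _
    have h2 : ({x : V | x ≠ c ∧ x ≠ d} : Set V) = ({c, d}ᶜ : Set V) := by
      ext x; simp [not_or]
    have h3 : Nat.card {x : V // x ≠ c ∧ x ≠ d} = ({x : V | x ≠ c ∧ x ≠ d} : Set V).ncard :=
      Nat.card_coe_set_eq _
    rw [Set.ncard_pair hcd'] at h1
    rw [h3, h2]
    omega
  exact ⟨hconn, hcub', hcardV, hbridge⟩
end

section
/- Let ΓD be a connected cubic graph with a bridge (a,b), and let c and d be the other two neighbours of a. Suppose (c,d) is an edge of ΓD and that c and d have a common third neighbour e, and let g be the third neighbour of e (besides c and d). Then the edge (e,g) is a bridge of ΓD, and the graph obtained from ΓD by deleting the four vertices a, c, d, e (together with their incident edges) and adding the edge (b,g) is a connected cubic graph in which the edge (b,g) is a bridge. -/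
open SimpleGraph

/-- Delete the vertices a, c, d, e (with their incident edges) and add the edge
(b,g). -/
def removeDiamond {V : Type*} (G : SimpleGraph V) (a c d e b g : V) :
    SimpleGraph {x : V // x ≠ a ∧ x ≠ c ∧ x ≠ d ∧ x ≠ e} :=
  SimpleGraph.fromRel (fun p q => G.Adj p.1 q.1 ∨ (p.1 = b ∧ q.1 = g))


private lemma walk_closed {V : Type*} {G : SimpleGraph V} {S : Set V}
    (h : ∀ ⦃u v : V⦄, u ∈ S → G.Adj u v → v ∈ S) :
    ∀ {x y : V}, G.Walk x y → x ∈ S → y ∈ S := by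
  intro x y p
  induction p with
  | nil => exact id
  | cons hadj _ ih => exact fun hx => ih (h hx hadj)

private lemma sym2_ne_left {α : Type*} {u v w x : α} (h1 : u ≠ w) (h2 : u ≠ x) :
    s(u, v) ≠ s(w, x) := by
  intro h
  rcases Sym2.eq_iff.1 h with ⟨rfl, rfl⟩ | ⟨rfl, rfl⟩
  · exact h1 rfl
  · exact h2 rfl

private lemma sym2_ne_out {α : Type*} {u v w x : α} (h1 : u ≠ w) (h2 : v ≠ w) :
    s(u, v) ≠ s(w, x) := by
  intro h
  rcases Sym2.eq_iff.1 h with ⟨rfl, rfl⟩ | ⟨rfl, rfl⟩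
  · exact h1 rfl
  · exact h2 rfl

private lemma nbhd_eq {V : Type*} {G : SimpleGraph V} (hcub : IsCubic G) {v x y z : V}
    (hx : G.Adj v x) (hy : G.Adj v y) (hz : G.Adj v z)
    (hxy : x ≠ y) (hxz : x ≠ z) (hyz : y ≠ z) :
    G.neighborSet v = {x, y, z} := by
  have hsub : ({x, y, z} : Set V) ⊆ G.neighborSet v := by
    intro w hw
    rcases hw with rfl | rfl | rfl <;> assumption
  have hfin : (G.neighborSet v).Finite :=
    Set.finite_of_ncard_ne_zero (by rw [hcub v]; norm_num)
  have hcard : ({x, y, z} : Set V).ncard = 3 := by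
    rw [Set.ncard_insert_of_notMem (by simp [hxy, hxz])
      (Set.Finite.insert _ (Set.finite_singleton _)), Set.ncard_pair hyz]
  exact (Set.eq_of_subset_of_ncard_le hsub (by rw [hcub v, hcard]) hfin).symm

/-- the inverse of a type 1 parthenogenic operation (removal of a
parthenogenic diamond). If (a,b) is a bridge, the other neighbours c, d of a are
adjacent and have a common third neighbour e with third neighbour g, then (e,g) is a
bridge of the original graph, and deleting a, c, d, e and adding the edge (b,g)
yields a connected cubic graph in which (b,g) is a bridge. -/
theorem inverse_parth1_spec {V : Type*} (G : SimpleGraph V)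
    (hG : G.Connected) (hcub : IsCubic G) (a b c d e g : V)
    (hbr : G.IsBridge s(a, b))
    (hac : G.Adj a c) (had : G.Adj a d) (hcd' : c ≠ d) (hcb : c ≠ b) (hdb : d ≠ b)
    (hcd : G.Adj c d)
    (hce : G.Adj c e) (hde : G.Adj d e) (hea : e ≠ a)
    (heg : G.Adj e g) (hgc : g ≠ c) (hgd : g ≠ d) :
    G.IsBridge s(e, g) ∧
      ∃ (hb : b ≠ a ∧ b ≠ c ∧ b ≠ d ∧ b ≠ e) (hg : g ≠ a ∧ g ≠ c ∧ g ≠ d ∧ g ≠ e),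
        (removeDiamond G a c d e b g).Connected ∧
          IsCubic (removeDiamond G a c d e b g) ∧
          (removeDiamond G a c d e b g).IsBridge s(⟨b, hb⟩, ⟨g, hg⟩) := by
  classical
  have hnr : ¬(G \ fromEdgeSet {s(a, b)}).Reachable a b := (isBridge_iff).1 hbr
  have hab : G.Adj a b := hbr.reachable_iff_adj.1 (hG.preconnected a b)
  set H : SimpleGraph V := G \ fromEdgeSet {s(a, b)} with hH
  have mkH : ∀ {u v : V}, G.Adj u v → s(u, v) ≠ s(a, b) → H.Adj u v := by
    intro u v h hne
    have : H = G.deleteEdges {s(a, b)} := rfl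
    rw [this, deleteEdges_adj]
    exact ⟨h, by simpa using hne⟩
  have hHA : ∀ {u v : V}, H.Adj u v → G.Adj u v := by
    intro u v h
    have he : H = G.deleteEdges {s(a, b)} := rfl
    rw [he, deleteEdges_adj] at h
    exact h.1
  -- distinctness
  have hba : b ≠ a := hab.ne'
  have hca : c ≠ a := hac.ne'
  have hda : d ≠ a := had.ne'
  have hec : e ≠ c := hce.ne'
  have hed : e ≠ d := hde.ne'
  have hge : g ≠ e := heg.ne'
  -- a-side reachability in H
  have hca' : H.Adj c a := mkH hac.symm (sym2_ne_left hca hcb)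
  have hce' : H.Adj c e := mkH hce (sym2_ne_left hca hcb)
  have reach_ae : H.Reachable a e := (hca'.symm.reachable).trans hce'.reachable
  have hbe : b ≠ e := fun h => hnr (by rw [h]; exact reach_ae)
  -- neighbourhoods
  have Na : G.neighborSet a = {b, c, d} := nbhd_eq hcub hab hac had hcb.symm hdb.symm hcd'
  have Nc : G.neighborSet c = {a, d, e} :=
    nbhd_eq hcub hac.symm hcd hce hda.symm hea.symm hed.symm
  have Nd : G.neighborSet d = {a, c, e} :=
    nbhd_eq hcub had.symm hcd.symm hde hca.symm hea.symm hec.symm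
  have Ne' : G.neighborSet e = {c, d, g} := nbhd_eq hcub hce.symm hde.symm heg hcd' hgc.symm hgd.symm
  have adj_a : ∀ {x : V}, G.Adj a x → x = b ∨ x = c ∨ x = d := by
    intro x hx
    have : x ∈ G.neighborSet a := hx
    rw [Na] at this; simpa using this
  have adj_c : ∀ {x : V}, G.Adj c x → x = a ∨ x = d ∨ x = e := by
    intro x hx
    have : x ∈ G.neighborSet c := hx
    rw [Nc] at this; simpa using this
  have adj_d : ∀ {x : V}, G.Adj d x → x = a ∨ x = c ∨ x = e := by
    intro x hx
    have : x ∈ G.neighborSet d := hx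
    rw [Nd] at this; simpa using this
  have adj_e : ∀ {x : V}, G.Adj e x → x = c ∨ x = d ∨ x = g := by
    intro x hx
    have : x ∈ G.neighborSet e := hx
    rw [Ne'] at this; simpa using this
  have hga : g ≠ a := by
    rintro rfl
    rcases adj_a heg.symm with h | h | h
    · exact hbe h.symm
    · exact hec h
    · exact hed h
  have heg' : H.Adj e g := mkH heg (sym2_ne_left hea hbe.symm)
  have reach_ag : H.Reachable a g := reach_ae.trans heg'.reachable
  have hgb : g ≠ b := fun h => hnr (h ▸ reach_ag)
  have hnadj_bc : ¬G.Adj b c := by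
    intro h
    rcases adj_c h.symm with h1 | h1 | h1
    · exact hba h1
    · exact hdb h1.symm
    · exact hbe h1
  have hnadj_bd : ¬G.Adj b d := by
    intro h
    rcases adj_d h.symm with h1 | h1 | h1
    · exact hba h1
    · exact hcb h1.symm
    · exact hbe h1
  have hnadj_be : ¬G.Adj b e := by
    intro h
    rcases adj_e h.symm with h1 | h1 | h1
    · exact hcb (h1.symm)
    · exact hdb (h1.symm)
    · exact hgb (h1.symm)
  have hnadj_bg : ¬G.Adj b g := by
    intro h
    exact hnr (reach_ag.trans (mkH h.symm (sym2_ne_left hga hgb)).reachable)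
  have hnadj_ga : ¬G.Adj g a := by
    intro h
    rcases adj_a h.symm with h1 | h1 | h1
    · exact hgb h1
    · exact hgc h1
    · exact hgd h1
  have hnadj_gc : ¬G.Adj g c := by
    intro h
    rcases adj_c h.symm with h1 | h1 | h1
    · exact hga h1
    · exact hgd h1
    · exact hge h1
  have hnadj_gd : ¬G.Adj g d := by
    intro h
    rcases adj_d h.symm with h1 | h1 | h1
    · exact hga h1
    · exact hgc h1
    · exact hge h1
  -- bridge (e,g)
  have bridge_eg : G.IsBridge s(e, g) := by
    rw [isBridge_iff]
    intro hre
    obtain ⟨p⟩ := hre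
    set K : SimpleGraph V := G \ fromEdgeSet {s(e, g)} with hK
    have hKadj : ∀ {u v : V}, K.Adj u v → G.Adj u v ∧ s(u, v) ≠ s(e, g) := by
      intro u v h
      have he2 : K = G.deleteEdges {s(e, g)} := rfl
      rw [he2, deleteEdges_adj] at h
      exact ⟨h.1, by simpa using h.2⟩
    have hclosed : ∀ ⦃u v : V⦄, u ∈ ({a, c, d, e} : Set V) ∪ {x | H.Reachable b x} →
        K.Adj u v → v ∈ ({a, c, d, e} : Set V) ∪ {x | H.Reachable b x} := by
      intro u v hu huv
      obtain ⟨hG', hne⟩ := hKadj huv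
      rcases hu with hu | hu
      · rcases hu with rfl | rfl | rfl | rfl
        · rcases adj_a hG' with rfl | rfl | rfl
          · exact Or.inr (Reachable.refl _)
          · exact Or.inl (by simp)
          · exact Or.inl (by simp)
        · rcases adj_c hG' with rfl | rfl | rfl <;> exact Or.inl (by simp)
        · rcases adj_d hG' with rfl | rfl | rfl <;> exact Or.inl (by simp)
        · rcases adj_e hG' with rfl | rfl | rfl
          · exact Or.inl (by simp)
          · exact Or.inl (by simp)
          · exact absurd rfl hne
      · by_cases hsab : s(u, v) = s(a, b)
        · rcases Sym2.eq_iff.1 hsab with ⟨rfl, rfl⟩ | ⟨rfl, rfl⟩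
          · exact absurd hu.symm hnr
          · exact Or.inl (by simp)
        · exact Or.inr (hu.trans (mkH hG' hsab).reachable)
    have hg' : g ∈ ({a, c, d, e} : Set V) ∪ {x | H.Reachable b x} :=
      walk_closed hclosed p (Or.inl (by simp))
    rcases hg' with hmem | hreach
    · rcases hmem with h | h | h | h
      · exact hga h
      · exact hgc h
      · exact hgd h
      · exact hge h
    · exact hnr (reach_ag.trans hreach.symm)
  -- second part
  have hbq : b ≠ a ∧ b ≠ c ∧ b ≠ d ∧ b ≠ e := ⟨hba, hcb.symm, hdb.symm, hbe⟩
  have hgq : g ≠ a ∧ g ≠ c ∧ g ≠ d ∧ g ≠ e := ⟨hga, hgc, hgd, hge⟩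
  set rd := removeDiamond G a c d e b g with hrd
  set bb : {x : V // x ≠ a ∧ x ≠ c ∧ x ≠ d ∧ x ≠ e} := ⟨b, hbq⟩ with hbb
  set gg : {x : V // x ≠ a ∧ x ≠ c ∧ x ≠ d ∧ x ≠ e} := ⟨g, hgq⟩ with hgg
  have rdadj : ∀ p q : {x : V // x ≠ a ∧ x ≠ c ∧ x ≠ d ∧ x ≠ e},
      rd.Adj p q ↔ p.1 ≠ q.1 ∧ (G.Adj p.1 q.1 ∨ (p.1 = b ∧ q.1 = g) ∨ (p.1 = g ∧ q.1 = b)) := by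
    intro p q
    rw [hrd, removeDiamond, fromRel_adj]
    constructor
    · rintro ⟨h1, (h | ⟨h2, h3⟩) | (h | ⟨h2, h3⟩)⟩
      · exact ⟨fun hh => h1 (Subtype.ext hh), Or.inl h⟩
      · exact ⟨fun hh => h1 (Subtype.ext hh), Or.inr (Or.inl ⟨h2, h3⟩)⟩
      · exact ⟨fun hh => h1 (Subtype.ext hh), Or.inl h.symm⟩
      · exact ⟨fun hh => h1 (Subtype.ext hh), Or.inr (Or.inr ⟨h3, h2⟩)⟩
    · rintro ⟨h1, h | ⟨h2, h3⟩ | ⟨h2, h3⟩⟩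
      · exact ⟨fun hh => h1 (congrArg Subtype.val hh), Or.inl (Or.inl h)⟩
      · exact ⟨fun hh => h1 (congrArg Subtype.val hh), Or.inl (Or.inr ⟨h2, h3⟩)⟩
      · exact ⟨fun hh => h1 (congrArg Subtype.val hh), Or.inr (Or.inr ⟨h3, h2⟩)⟩
  have adj_bg : rd.Adj bb gg := (rdadj bb gg).2 ⟨hgb.symm, Or.inr (Or.inl ⟨rfl, rfl⟩)⟩
  -- connectivity
  have conn_rd : rd.Connected := by
    have hbmem : b ∈ ({a, c, d, e} : Set V) ∪
        {x | ∃ h : x ≠ a ∧ x ≠ c ∧ x ≠ d ∧ x ≠ e, rd.Reachable bb ⟨x, h⟩} :=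
      Or.inr ⟨hbq, Reachable.refl _⟩
    have hclosed2 : ∀ ⦃u v : V⦄, u ∈ ({a, c, d, e} : Set V) ∪
        {x | ∃ h : x ≠ a ∧ x ≠ c ∧ x ≠ d ∧ x ≠ e, rd.Reachable bb ⟨x, h⟩} →
        G.Adj u v → v ∈ ({a, c, d, e} : Set V) ∪
        {x | ∃ h : x ≠ a ∧ x ≠ c ∧ x ≠ d ∧ x ≠ e, rd.Reachable bb ⟨x, h⟩} := by
      intro u v hu huv
      rcases hu with hu | ⟨hu, hru⟩
      · rcases hu with rfl | rfl | rfl | rfl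
        · rcases adj_a huv with rfl | rfl | rfl
          · exact hbmem
          · exact Or.inl (by simp)
          · exact Or.inl (by simp)
        · rcases adj_c huv with rfl | rfl | rfl <;> exact Or.inl (by simp)
        · rcases adj_d huv with rfl | rfl | rfl <;> exact Or.inl (by simp)
        · rcases adj_e huv with rfl | rfl | rfl
          · exact Or.inl (by simp)
          · exact Or.inl (by simp)
          · exact Or.inr ⟨hgq, adj_bg.reachable⟩
      · by_cases hva : v = a
        · exact Or.inl (by simp [hva])
        by_cases hvc : v = c
        · exact Or.inl (by simp [hvc])
        by_cases hvd : v = d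
        · exact Or.inl (by simp [hvd])
        by_cases hve : v = e
        · exact Or.inl (by simp [hve])
        refine Or.inr ⟨⟨hva, hvc, hvd, hve⟩, hru.trans ?_⟩
        exact ((rdadj ⟨u, hu⟩ ⟨v, ⟨hva, hvc, hvd, hve⟩⟩).2 ⟨huv.ne, Or.inl huv⟩).reachable
    have hall : ∀ x : {x : V // x ≠ a ∧ x ≠ c ∧ x ≠ d ∧ x ≠ e}, rd.Reachable bb x := by
      intro x
      obtain ⟨w⟩ := hG.preconnected b x.1
      have hx := walk_closed hclosed2 w hbmem
      rcases hx with hx | ⟨h, hr⟩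
      · exfalso
        rcases hx with h | h | h | h
        · exact x.2.1 h
        · exact x.2.2.1 h
        · exact x.2.2.2.1 h
        · exact x.2.2.2.2 h
      · have hxx : (⟨x.1, h⟩ : {x : V // x ≠ a ∧ x ≠ c ∧ x ≠ d ∧ x ≠ e}) = x := Subtype.ext rfl
        rwa [hxx] at hr
    rw [connected_iff]
    exact ⟨fun p q => (hall p).symm.trans (hall q), ⟨bb⟩⟩
  -- cubic
  have hfin' : ∀ v : V, (G.neighborSet v).Finite := fun v =>
    Set.finite_of_ncard_ne_zero (by rw [hcub v]; norm_num)
  have cubic_rd : IsCubic rd := by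
    rintro ⟨p, hp⟩
    rw [← Set.ncard_image_of_injective (rd.neighborSet ⟨p, hp⟩) Subtype.val_injective]
    by_cases hpb : p = b
    · have hxb : (⟨p, hp⟩ : {x : V // x ≠ a ∧ x ≠ c ∧ x ≠ d ∧ x ≠ e}) = bb := Subtype.ext hpb
      rw [hxb]
      have himg : Subtype.val '' rd.neighborSet bb = insert g (G.neighborSet b \ {a}) := by
        ext v
        constructor
        · rintro ⟨q, hq, rfl⟩
          rcases (rdadj _ q).1 hq with ⟨hne, h | ⟨h1, h2⟩ | ⟨h1, h2⟩⟩
          · exact Or.inr ⟨h, q.2.1⟩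
          · exact Or.inl h2
          · exact absurd h1 hgb.symm
        · rintro (rfl | ⟨hv, hva⟩)
          · exact ⟨gg, adj_bg, rfl⟩
          · have hvc : v ≠ c := fun h => hnadj_bc (h ▸ hv)
            have hvd : v ≠ d := fun h => hnadj_bd (h ▸ hv)
            have hve : v ≠ e := fun h => hnadj_be (h ▸ hv)
            exact ⟨⟨v, hva, hvc, hvd, hve⟩,
              (rdadj _ _).2 ⟨(hv : G.Adj b v).ne, Or.inl hv⟩, rfl⟩
      rw [himg, Set.ncard_insert_of_notMem (fun h => hnadj_bg h.1)
        ((hfin' b).subset Set.diff_subset),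
        Set.ncard_diff_singleton_of_mem (show a ∈ G.neighborSet b from hab.symm),
        hcub b]
    by_cases hpg : p = g
    · have hxg : (⟨p, hp⟩ : {x : V // x ≠ a ∧ x ≠ c ∧ x ≠ d ∧ x ≠ e}) = gg := Subtype.ext hpg
      rw [hxg]
      have himg : Subtype.val '' rd.neighborSet gg = insert b (G.neighborSet g \ {e}) := by
        ext v
        constructor
        · rintro ⟨q, hq, rfl⟩
          rcases (rdadj _ q).1 hq with ⟨hne, h | ⟨h1, h2⟩ | ⟨h1, h2⟩⟩
          · exact Or.inr ⟨h, q.2.2.2.2⟩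
          · exact absurd h1 hgb
          · exact Or.inl h2
        · rintro (rfl | ⟨hv, hve⟩)
          · exact ⟨bb, adj_bg.symm, rfl⟩
          · have hva : v ≠ a := fun h => hnadj_ga (h ▸ hv)
            have hvc : v ≠ c := fun h => hnadj_gc (h ▸ hv)
            have hvd : v ≠ d := fun h => hnadj_gd (h ▸ hv)
            exact ⟨⟨v, hva, hvc, hvd, hve⟩,
              (rdadj _ _).2 ⟨(hv : G.Adj g v).ne, Or.inl hv⟩, rfl⟩
      rw [himg, Set.ncard_insert_of_notMem (fun h => hnadj_bg h.1.symm)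
        ((hfin' g).subset Set.diff_subset),
        Set.ncard_diff_singleton_of_mem (show e ∈ G.neighborSet g from heg.symm),
        hcub g]
    · have himg : Subtype.val '' rd.neighborSet ⟨p, hp⟩ = G.neighborSet p := by
        ext v
        constructor
        · rintro ⟨q, hq, rfl⟩
          rcases (rdadj _ q).1 hq with ⟨hne, h | ⟨h1, h2⟩ | ⟨h1, h2⟩⟩
          · exact h
          · exact absurd h1 hpb
          · exact absurd h1 hpg
        · intro hv
          have hva : v ≠ a := by
            intro hh
            rcases adj_a (G.adj_symm (hh ▸ hv)) with h | h | h
            · exact hpb h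
            · exact hp.2.1 h
            · exact hp.2.2.1 h
          have hvc : v ≠ c := by
            intro hh
            rcases adj_c (G.adj_symm (hh ▸ hv)) with h | h | h
            · exact hp.1 h
            · exact hp.2.2.1 h
            · exact hp.2.2.2 h
          have hvd : v ≠ d := by
            intro hh
            rcases adj_d (G.adj_symm (hh ▸ hv)) with h | h | h
            · exact hp.1 h
            · exact hp.2.1 h
            · exact hp.2.2.2 h
          have hve : v ≠ e := by
            intro hh
            rcases adj_e (G.adj_symm (hh ▸ hv)) with h | h | h
            · exact hp.2.1 h
            · exact hp.2.2.1 h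
            · exact hpg h
          exact ⟨⟨v, hva, hvc, hvd, hve⟩,
            (rdadj _ _).2 ⟨(hv : G.Adj p v).ne, Or.inl hv⟩, rfl⟩
      rw [himg, hcub p]
  -- bridge (b,g) in rd
  refine ⟨bridge_eg, hbq, hgq, conn_rd, cubic_rd, ?_⟩
  rw [isBridge_iff]
  intro hre
  obtain ⟨p⟩ := hre
  have hclosed3 : ∀ ⦃u v : {x : V // x ≠ a ∧ x ≠ c ∧ x ≠ d ∧ x ≠ e}⦄,
      u ∈ {x : {x : V // x ≠ a ∧ x ≠ c ∧ x ≠ d ∧ x ≠ e} | H.Reachable b x.1} →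
      (rd \ fromEdgeSet {s(bb, gg)}).Adj u v →
      v ∈ {x : {x : V // x ≠ a ∧ x ≠ c ∧ x ≠ d ∧ x ≠ e} | H.Reachable b x.1} := by
    intro u v hu huv
    have hd : (rd \ fromEdgeSet {s(bb, gg)}) = rd.deleteEdges {s(bb, gg)} := rfl
    rw [hd, deleteEdges_adj] at huv
    obtain ⟨hadj, hne⟩ := huv
    rcases (rdadj u v).1 hadj with ⟨hne', h | ⟨h1, h2⟩ | ⟨h1, h2⟩⟩
    · have hsab : s(u.1, v.1) ≠ s(a, b) := sym2_ne_out u.2.1 v.2.1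
      exact hu.trans (mkH h hsab).reachable
    · exact absurd (by rw [show u = bb from Subtype.ext h1, show v = gg from Subtype.ext h2]; simp) hne
    · exact absurd (by rw [show u = gg from Subtype.ext h1, show v = bb from Subtype.ext h2, Sym2.eq_swap]; simp) hne
  have hgmem := walk_closed hclosed3 p (Reachable.refl b)
  exact hnr (reach_ag.trans hgmem.symm)
end
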